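/- arXiv:1605.00187 — 4 statements merged into one kernel-verified Lean document; each statement's English description precedes it below -/
import Mathlib

section
/- If μ is a weakly s-regular Borel probability measure on [0,1)^d and A is a Borel set with μ(A) > 0, then the normalized restriction μ_A (defined by μ_A(B) = μ(A ∩ B)/μ(A)) is weakly s-regular. -/
open MeasureTheory Metric Set Filter
open scoped ENNReal NNReal Topology

noncomputable section

/-- The plane `ℝ²` with the Euclidean norm. -/
abbrev Plane := EuclideanSpace ℝ (Fin 2)

/-- The closed unit square `[0,1]²`. -/
def unitSquare : Set Plane := {x | ∀ i, 0 ≤ x i ∧ x i ≤ 1}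

/-- The half-open unit cube `[0,1)^d`. -/
def unitCubeHO (d : ℕ) : Set (EuclideanSpace ℝ (Fin d)) := {x | ∀ i, 0 ≤ x i ∧ x i < 1}

/-- The pinned distance set `dist(x,A) = {|x-y| : y ∈ A}`. -/
def pinnedDist (x : Plane) (A : Set Plane) : Set ℝ := (fun y => dist x y) '' A

/-- The distance set `dist(A,B) = {|x-y| : x ∈ A, y ∈ B}`. -/
def distSet (A B : Set Plane) : Set ℝ := {r | ∃ x ∈ A, ∃ y ∈ B, r = dist x y}

/-- Number of cells of the grid `εℤ` that intersect `F ⊆ ℝ`. -/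
def gridCount (F : Set ℝ) (ε : ℝ) : ℕ :=
  Nat.card {n : ℤ // (Set.Ico ((n : ℝ) * ε) (((n : ℝ) + 1) * ε) ∩ F).Nonempty}

/-- Number of cells of the grid `εℤ²` that intersect `F ⊆ ℝ²`. -/
def gridCount2 (F : Set Plane) (ε : ℝ) : ℕ :=
  Nat.card {n : Fin 2 → ℤ //
    ({x : Plane | ∀ i, (n i : ℝ) * ε ≤ x i ∧ x i < ((n i : ℝ) + 1) * ε} ∩ F).Nonempty}

/-- Lower box-counting dimension of `F ⊆ ℝ`. -/
def lbdim (F : Set ℝ) : ℝ :=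
  Filter.liminf (fun ε : ℝ => Real.log (gridCount F ε) / (-Real.log ε)) (nhdsWithin 0 (Set.Ioi 0))

/-- Upper box-counting dimension of `F ⊆ ℝ`. -/
def ubdim (F : Set ℝ) : ℝ :=
  Filter.limsup (fun ε : ℝ => Real.log (gridCount F ε) / (-Real.log ε)) (nhdsWithin 0 (Set.Ioi 0))

/-- Lower box-counting dimension of `F ⊆ ℝ²`. -/
def lbdim2 (F : Set Plane) : ℝ :=
  Filter.liminf (fun ε : ℝ => Real.log (gridCount2 F ε) / (-Real.log ε)) (nhdsWithin 0 (Set.Ioi 0))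

/-- Upper box-counting dimension of `F ⊆ ℝ²`. -/
def ubdim2 (F : Set Plane) : ℝ :=
  Filter.limsup (fun ε : ℝ => Real.log (gridCount2 F ε) / (-Real.log ε)) (nhdsWithin 0 (Set.Ioi 0))

/-- Modified lower box-counting dimension of `F ⊆ ℝ`. -/
def mlbdim (F : Set ℝ) : ℝ :=
  sInf {a : ℝ | ∃ G : ℕ → Set ℝ, (∀ i, Bornology.IsBounded (G i)) ∧ (F ⊆ ⋃ i, G i) ∧
    ∀ i, lbdim (G i) ≤ a}

/-- A set `E ⊆ ℝ^d` is discrete `(s,C)`-Ahlfors regular at scale `2^{-N}`. -/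
def DiscreteAhlfors (d : ℕ) (E : Set (EuclideanSpace ℝ (Fin d))) (s C : ℝ) (N : ℕ) : Prop :=
  E.Finite ∧ ∀ x ∈ E, ∀ k : ℕ, k < N →
    C⁻¹ * (2 : ℝ) ^ (((N : ℝ) - (k : ℝ)) * s)
        ≤ (Nat.card ↥(E ∩ closedBall x ((2 : ℝ) ^ (-(k : ℤ)))) : ℝ) ∧
    (Nat.card ↥(E ∩ closedBall x ((2 : ℝ) ^ (-(k : ℤ)))) : ℝ)
        ≤ C * (2 : ℝ) ^ (((N : ℝ) - (k : ℝ)) * s)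

/-- Topological support of a measure. -/
def msupport {X : Type*} [TopologicalSpace X] [MeasurableSpace X]
    (μ : MeasureTheory.Measure X) : Set X :=
  {x | ∀ U : Set X, IsOpen U → x ∈ U → 0 < μ U}

/-- A measure is `(s,C)`-Ahlfors regular at scale `2^{-N}`. -/
def ARMeasureAtScale (d : ℕ) (ν : Measure (EuclideanSpace ℝ (Fin d))) (s C : ℝ) (N : ℕ) : Prop :=
  ∀ x ∈ msupport ν, ∀ r : ℝ, (2 : ℝ) ^ (-(N : ℤ)) ≤ r → r ≤ 1 →
    ENNReal.ofReal (C⁻¹ * r ^ s) ≤ ν (closedBall x r) ∧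
      ν (closedBall x r) ≤ ENNReal.ofReal (C * r ^ s)

/-- A measure is `(s,C)`-Ahlfors regular. -/
def ARMeasure (d : ℕ) (ν : Measure (EuclideanSpace ℝ (Fin d))) (s C : ℝ) : Prop :=
  ∀ x ∈ msupport ν, ∀ r : ℝ, 0 < r → r ≤ 1 →
    ENNReal.ofReal (C⁻¹ * r ^ s) ≤ ν (closedBall x r) ∧
      ν (closedBall x r) ≤ ENNReal.ofReal (C * r ^ s)

/-- A set `E` is `(s,C)`-Ahlfors regular: `ℋ^s|_E` is a positive finite `(s,C)`-Ahlfors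
regular measure. -/
def ARSet (d : ℕ) (E : Set (EuclideanSpace ℝ (Fin d))) (s C : ℝ) : Prop :=
  0 < μH[s] E ∧ μH[s] E < ⊤ ∧ ARMeasure d (μH[s].restrict E) s C

/-- The half-open dyadic cube of generation `k` indexed by `m ∈ ℤ^d`. -/
def dcube (d k : ℕ) (m : Fin d → ℤ) : Set (EuclideanSpace ℝ (Fin d)) :=
  {x | ∀ i, (m i : ℝ) * (2 : ℝ) ^ (-(k : ℤ)) ≤ x i ∧ x i < ((m i : ℝ) + 1) * (2 : ℝ) ^ (-(k : ℤ))}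

/-- The homothety mapping the dyadic cube `dcube d k m` onto `[0,1)^d`. -/
def cubeMap (d k : ℕ) (m : Fin d → ℤ) (x : EuclideanSpace ℝ (Fin d)) :
    EuclideanSpace ℝ (Fin d) :=
  (EuclideanSpace.equiv (Fin d) ℝ).symm (fun i => (2 : ℝ) ^ k * x i - (m i : ℝ))

/-- The (left) corner of the dyadic cube `dcube d N m`. -/
def cubeCorner (d N : ℕ) (m : Fin d → ℤ) : EuclideanSpace ℝ (Fin d) :=
  (EuclideanSpace.equiv (Fin d) ℝ).symm (fun i => (m i : ℝ) * (2 : ℝ) ^ (-(N : ℤ)))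

/-- `μ^Q`: the normalized restriction of `μ` to a dyadic cube, renormalized to `[0,1)^d`. -/
def cubeMeasure (d k : ℕ) (m : Fin d → ℤ) (μ : Measure (EuclideanSpace ℝ (Fin d))) :
    Measure (EuclideanSpace ℝ (Fin d)) :=
  Measure.map (cubeMap d k m) ((μ (dcube d k m))⁻¹ • μ.restrict (dcube d k m))

/-- Entropy (base 2) of `μ` with respect to the dyadic partition of generation `k`. -/
def entropy (d : ℕ) (μ : Measure (EuclideanSpace ℝ (Fin d))) (k : ℕ) : ℝ :=
  ∑' m : Fin d → ℤ, -((μ (dcube d k m)).toReal * Real.logb 2 (μ (dcube d k m)).toReal)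

/-- Normalized entropy `H_k(μ) = H(μ, 𝒟_k)/k`. -/
def nentropy (d : ℕ) (μ : Measure (EuclideanSpace ℝ (Fin d))) (k : ℕ) : ℝ :=
  entropy d μ k / k

/-- The half-open dyadic interval of generation `k` indexed by `m ∈ ℤ`. -/
def dint (k : ℕ) (m : ℤ) : Set ℝ :=
  Set.Ico ((m : ℝ) * (2 : ℝ) ^ (-(k : ℤ))) (((m : ℝ) + 1) * (2 : ℝ) ^ (-(k : ℤ)))

/-- Entropy (base 2) of a measure on `ℝ` with respect to dyadic intervals of generation `k`. -/
def entropyR (μ : Measure ℝ) (k : ℕ) : ℝ :=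
  ∑' m : ℤ, -((μ (dint k m)).toReal * Real.logb 2 (μ (dint k m)).toReal)

/-- Normalized entropy of a measure on `ℝ`. -/
def nentropyR (μ : Measure ℝ) (k : ℕ) : ℝ :=
  entropyR μ k / k

open Classical in
/-- `μ` is `s`-rich at resolution `(N,q,δ)`. -/
def sRich (d : ℕ) (μ : Measure (EuclideanSpace ℝ (Fin d))) (s : ℝ) (N q : ℕ) (δ : ℝ) : Prop :=
  (1 / N : ℝ) * ∑ n ∈ Finset.range N, ∑' m : Fin d → ℤ,
    (if 0 < μ (dcube d n m) ∧ nentropy d (cubeMeasure d n m μ) q < s - δ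
      then (μ (dcube d n m)).toReal else 0) < δ

/-- `μ` is weakly `s`-regular. -/
def WeaklyRegular (d : ℕ) (μ : Measure (EuclideanSpace ℝ (Fin d))) (s : ℝ) : Prop :=
  ∀ δ : ℝ, 0 < δ → ∃ q : ℕ, ∃ N₀ : ℕ, ∀ N : ℕ, N₀ ≤ N → sRich d μ s N q δ

/-- Average of the quantity `f(μ^Q)` with respect to the scenery distribution `⟨μ⟩_{[0,N)}`. -/
def sceneryAvg (d : ℕ) (μ : Measure (EuclideanSpace ℝ (Fin d))) (N : ℕ)
    (f : Measure (EuclideanSpace ℝ (Fin d)) → ℝ) : ℝ :=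
  (1 / N : ℝ) * ∑ n ∈ Finset.range N, ∑' m : Fin d → ℤ,
    (μ (dcube d n m)).toReal * f (cubeMeasure d n m μ)

/-- The two-sided open cone with apex `a`, direction `v` and half-opening angle `β`. -/
def cone (a : Plane) (β : ℝ) (v : Plane) : Set Plane :=
  {x | x ≠ a ∧ (InnerProductGeometry.angle (x - a) v < β ∨
      InnerProductGeometry.angle (x - a) (-v) < β)}

/-- `A` is `k`-discrete: every dyadic square of generation `k` contains at most one point. -/
def kDiscrete (A : Set Plane) (k : ℕ) : Prop :=
  ∀ m : Fin 2 → ℤ, (A ∩ dcube 2 k m).Subsingleton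

/-- Hausdorff dimension of a measure: `inf {dimH E : μ E > 0}`. -/
def hdimMeasure (d : ℕ) (μ : Measure (EuclideanSpace ℝ (Fin d))) : ℝ≥0∞ :=
  ⨅ (E : Set (EuclideanSpace ℝ (Fin d))) (_ : 0 < μ E), dimH E

/-- Orthogonal projection onto direction `v`: `Π_v(x) = v ⬝ x`. -/
def projDir (v x : Plane) : ℝ := inner ℝ v x

/-- The measure associated to a discrete set: `(1/#A) ∑_D #(A ∩ D) ℒ_D`. -/
def discreteToMeasure (d N : ℕ) (A : Set (EuclideanSpace ℝ (Fin d))) :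
    Measure (EuclideanSpace ℝ (Fin d)) :=
  (Nat.card ↥A : ℝ≥0∞)⁻¹ • Measure.sum (fun m : Fin d → ℤ =>
    (Nat.card ↥(A ∩ dcube d N m) : ℝ≥0∞) •
      ((volume (dcube d N m))⁻¹ • volume.restrict (dcube d N m)))


/-- The Katz--Tao example set
`A_N = {(i 2^{-N/2}, j 2^{-N}) : 0 ≤ i < 2^{N/2} - 1, 0 ≤ j < 2^{N/2}}`. -/
def exampleSet (N : ℕ) : Set Plane :=
  {p | ∃ i j : ℤ, 0 ≤ i ∧ i < 2 ^ (N / 2) - 1 ∧ 0 ≤ j ∧ j < 2 ^ (N / 2) ∧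
    p 0 = (i : ℝ) * (2 : ℝ) ^ (-((N / 2 : ℕ) : ℤ)) ∧ p 1 = (j : ℝ) * (2 : ℝ) ^ (-(N : ℤ))}

end


noncomputable section
namespace WR32
open Real
variable {d : ℕ}

open Real
variable {d : ℕ}

lemma cubeMap_apply (k : ℕ) (m : Fin d → ℤ) (x : EuclideanSpace ℝ (Fin d)) (i : Fin d) :
    cubeMap d k m x i = (2 : ℝ) ^ k * x i - (m i : ℝ) := rfl

lemma cubeMap_measurable (k : ℕ) (m : Fin d → ℤ) : Measurable (cubeMap d k m) :=
  ((EuclideanSpace.equiv (Fin d) ℝ).symm.continuous.comp (by fun_prop)).measurable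

lemma mem_dcube_iff (k : ℕ) (m : Fin d → ℤ) (x : EuclideanSpace ℝ (Fin d)) :
    x ∈ dcube d k m ↔ ∀ i, (m i : ℝ) ≤ (2:ℝ)^k * x i ∧ (2:ℝ)^k * x i < (m i : ℝ) + 1 := by
  have hc : (0:ℝ) < (2:ℝ)^k := by positivity
  have h2 : (2:ℝ) ^ (-(k:ℤ)) = ((2:ℝ)^k)⁻¹ := by
    rw [zpow_neg, zpow_natCast]
  constructor
  · intro hx i
    obtain ⟨h1', h2'⟩ := hx i
    rw [h2] at h1' h2'
    constructor
    · calc (m i : ℝ) = (m i : ℝ) * ((2:ℝ)^k)⁻¹ * (2:ℝ)^k := by field_simp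
        _ ≤ x i * (2:ℝ)^k := by nlinarith
        _ = (2:ℝ)^k * x i := by ring
    · calc (2:ℝ)^k * x i = x i * (2:ℝ)^k := by ring
        _ < ((m i:ℝ)+1) * ((2:ℝ)^k)⁻¹ * (2:ℝ)^k := by nlinarith
        _ = (m i : ℝ) + 1 := by field_simp
  · intro hx i
    obtain ⟨h1', h2'⟩ := hx i
    rw [h2]
    constructor
    · rw [mul_inv_le_iff₀ hc]; linarith [h1']
    · rw [← div_eq_mul_inv, lt_div_iff₀ hc]
      calc x i * 2^k = 2^k * x i := by ring
        _ < (m i : ℝ) + 1 := h2'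

lemma dcube_eq_preimage (k : ℕ) (m : Fin d → ℤ) :
    dcube d k m = cubeMap d k m ⁻¹' unitCubeHO d := by
  ext x
  rw [mem_dcube_iff]
  simp only [Set.mem_preimage, unitCubeHO, Set.mem_setOf_eq, cubeMap_apply]
  constructor
  · intro h i; obtain ⟨a, b⟩ := h i; constructor <;> linarith
  · intro h i; obtain ⟨a, b⟩ := h i; constructor <;> linarith

lemma measurableSet_unitCubeHO : MeasurableSet (unitCubeHO d) := by
  have : unitCubeHO d = ⋂ i, (fun x : EuclideanSpace ℝ (Fin d) => x i) ⁻¹' Set.Ico (0:ℝ) 1 := by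
    ext x; simp [unitCubeHO, Set.mem_iInter, forall_and]
  rw [this]
  exact MeasurableSet.iInter fun i =>
    (by fun_prop : Measurable fun x : EuclideanSpace ℝ (Fin d) => x i) measurableSet_Ico

lemma measurableSet_dcube (k : ℕ) (m : Fin d → ℤ) : MeasurableSet (dcube d k m) := by
  rw [dcube_eq_preimage]; exact (cubeMap_measurable k m) measurableSet_unitCubeHO

lemma pairwise_disjoint_dcube (k : ℕ) :
    Pairwise (Function.onFun Disjoint fun m : Fin d → ℤ => dcube d k m) := by
  intro m m' hmm'
  rw [Function.onFun, Set.disjoint_left]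
  intro x hx hx'
  apply hmm'
  funext i
  rw [mem_dcube_iff] at hx hx'
  obtain ⟨a, b⟩ := hx i; obtain ⟨a', b'⟩ := hx' i
  have h1 : (m i : ℤ) < m' i + 1 := by exact_mod_cast (by push_cast; linarith : (m i:ℝ) < (m' i:ℝ) + 1)
  have h2 : (m' i : ℤ) < m i + 1 := by exact_mod_cast (by push_cast; linarith : (m' i:ℝ) < (m i:ℝ) + 1)
  omega

lemma exists_dcube (k : ℕ) (x : EuclideanSpace ℝ (Fin d)) :
    x ∈ dcube d k (fun i => ⌊(2:ℝ)^k * x i⌋) := by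
  rw [mem_dcube_iff]
  intro i
  exact ⟨Int.floor_le _, Int.lt_floor_add_one _⟩

lemma iUnion_dcube (k : ℕ) : (⋃ m : Fin d → ℤ, dcube d k m) = Set.univ := by
  ext x; simp only [Set.mem_iUnion, Set.mem_univ, iff_true]
  exact ⟨_, exists_dcube k x⟩


def Fq (d q : ℕ) : Finset (Fin d → ℤ) := Fintype.piFinset fun _ => Finset.Icc 0 (2^q - 1)

lemma intpow_cast (q : ℕ) : (((2:ℤ)^q : ℤ) : ℝ) = (2:ℝ)^q := by push_cast; ring

lemma mem_Fq_iff {q : ℕ} {m' : Fin d → ℤ} :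
    m' ∈ Fq d q ↔ ∀ i, 0 ≤ m' i ∧ m' i ≤ 2^q - 1 := by
  rw [Fq, Fintype.mem_piFinset]
  exact forall_congr' fun i => Finset.mem_Icc

lemma card_Fq (q : ℕ) : (Fq d q).card = 2^(q*d) := by
  rw [Fq, Fintype.card_piFinset]
  have h1 : (Finset.Icc (0:ℤ) (2^q - 1)).card = 2^q := by
    rw [Int.card_Icc]
    have h2 : (2:ℤ)^q - 1 + 1 - 0 = ((2^q : ℕ) : ℤ) := by push_cast; ring
    rw [h2, Int.toNat_natCast]
  rw [Finset.prod_congr rfl fun i _ => h1, Finset.prod_const, Finset.card_univ,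
    Fintype.card_fin, ← pow_mul, Nat.mul_comm]

lemma unit_subset_Fq (q : ℕ) : unitCubeHO d ⊆ ⋃ m' ∈ Fq d q, dcube d q m' := by
  intro x hx
  simp only [Set.mem_iUnion, exists_prop]
  refine ⟨fun i => ⌊(2:ℝ)^q * x i⌋, ?_, exists_dcube q x⟩
  rw [mem_Fq_iff]
  intro i
  obtain ⟨h0, h1⟩ := hx i
  have hq : (0:ℝ) < (2:ℝ)^q := by positivity
  constructor
  · exact Int.floor_nonneg.2 (by positivity)
  · have h3 : ((2:ℝ)^q * x i) < 2^q := by nlinarith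
    have h2 : (⌊(2:ℝ)^q * x i⌋ : ℝ) < (((2:ℤ)^q : ℤ):ℝ) := by
      rw [intpow_cast]; exact lt_of_le_of_lt (Int.floor_le _) h3
    have h4 : ⌊(2:ℝ)^q * x i⌋ < (2:ℤ)^q := by exact_mod_cast h2
    omega

lemma dcube_inter_unit_eq_empty {q : ℕ} {m' : Fin d → ℤ} (h : m' ∉ Fq d q) :
    dcube d q m' ∩ unitCubeHO d = ∅ := by
  rw [Set.eq_empty_iff_forall_notMem]
  rintro x ⟨hx, hu⟩
  apply h
  rw [mem_Fq_iff]
  intro i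
  rw [mem_dcube_iff] at hx
  obtain ⟨a, b⟩ := hx i
  obtain ⟨c0, c1⟩ := hu i
  have hq : (0:ℝ) < (2:ℝ)^q := by positivity
  constructor
  · have h1 : (-1:ℝ) < (m' i : ℝ) := by nlinarith
    have h2 : (-1:ℤ) < m' i := by exact_mod_cast h1
    omega
  · have h1 : (m' i : ℝ) < (((2:ℤ)^q:ℤ):ℝ) := by rw [intpow_cast]; nlinarith
    have h2 : m' i < (2:ℤ)^q := by exact_mod_cast h1
    omega




lemma negMulLog_add_le {u v : ℝ} (hu : 0 ≤ u) (hv : 0 ≤ v) :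
    Real.negMulLog (u + v) ≤ Real.negMulLog u + Real.negMulLog v := by
  rcases eq_or_lt_of_le hu with h | h
  · simp [← h]
  rcases eq_or_lt_of_le hv with h' | h'
  · simp [← h']
  have l1 : Real.log u ≤ Real.log (u + v) := Real.log_le_log h (by linarith)
  have l2 : Real.log v ≤ Real.log (u + v) := Real.log_le_log h' (by linarith)
  simp only [Real.negMulLog_def]
  nlinarith [mul_le_mul_of_nonneg_left l1 hu, mul_le_mul_of_nonneg_left l2 hv]

lemma sum_negMulLog_le {ι : Type*} (F : Finset ι) (p : ι → ℝ) (hp : ∀ i ∈ F, 0 ≤ p i)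
    (hs : ∑ i ∈ F, p i = 1) : ∑ i ∈ F, Real.negMulLog (p i) ≤ Real.log F.card := by
  have hFne : F.Nonempty := by
    rcases F.eq_empty_or_nonempty with h | h
    · exfalso; rw [h] at hs; simp at hs
    · exact h
  have hN : (0:ℝ) < (F.card : ℝ) := by exact_mod_cast Finset.card_pos.2 hFne
  have key : ∀ i ∈ F, Real.negMulLog (p i) ≤ p i * Real.log F.card + ((F.card:ℝ)⁻¹ - p i) := by
    intro i hi
    rcases eq_or_lt_of_le (hp i hi) with h | h
    · rw [← h]; simp
    · have h1 : Real.log ((F.card:ℝ)⁻¹ * (p i)⁻¹) ≤ (F.card:ℝ)⁻¹ * (p i)⁻¹ - 1 :=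
        Real.log_le_sub_one_of_pos (by positivity)
      have h2 : Real.log ((F.card:ℝ)⁻¹ * (p i)⁻¹) = -Real.log F.card - Real.log (p i) := by
        rw [Real.log_mul (by positivity) (by positivity), Real.log_inv, Real.log_inv]; ring
      rw [h2] at h1
      have h3 : p i * (-Real.log F.card - Real.log (p i)) ≤ p i * ((F.card:ℝ)⁻¹ * (p i)⁻¹ - 1) :=
        mul_le_mul_of_nonneg_left h1 (le_of_lt h)
      have h4 : p i * ((F.card:ℝ)⁻¹ * (p i)⁻¹ - 1) = (F.card:ℝ)⁻¹ - p i := by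
        field_simp
      rw [Real.negMulLog_def]
      nlinarith
  calc ∑ i ∈ F, Real.negMulLog (p i) ≤ ∑ i ∈ F, (p i * Real.log F.card + ((F.card:ℝ)⁻¹ - p i)) :=
        Finset.sum_le_sum key
    _ = (∑ i ∈ F, p i) * Real.log F.card + ((F.card:ℝ) * (F.card:ℝ)⁻¹ - ∑ i ∈ F, p i) := by
        rw [Finset.sum_add_distrib, ← Finset.sum_mul, Finset.sum_sub_distrib]
        simp [Finset.sum_const, nsmul_eq_mul]
    _ = Real.log F.card := by rw [hs, mul_inv_cancel₀ (ne_of_gt hN)]; ring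

lemma negMulLog_le_one_sub {θ : ℝ} (h0 : 0 < θ) (h1 : θ ≤ 1) : Real.negMulLog θ ≤ 1 - θ := by
  have h2 : Real.log θ⁻¹ ≤ θ⁻¹ - 1 := Real.log_le_sub_one_of_pos (by positivity)
  rw [Real.log_inv] at h2
  have h3 : θ * (-Real.log θ) ≤ θ * (θ⁻¹ - 1) := by
    apply mul_le_mul_of_nonneg_left _ (le_of_lt h0)
    linarith
  have h4 : θ * (θ⁻¹ - 1) = 1 - θ := by field_simp
  have h5 : Real.negMulLog θ = θ * (-Real.log θ) := by rw [Real.negMulLog_def]; ring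
  linarith

lemma negMulLog_le_two_sqrt {β : ℝ} (h0 : 0 ≤ β) : Real.negMulLog β ≤ 2 * Real.sqrt β := by
  rcases eq_or_lt_of_le h0 with h | h
  · rw [← h]; simp
  have hs : 0 < Real.sqrt β := Real.sqrt_pos.2 h
  have h2 : Real.log (Real.sqrt β)⁻¹ ≤ (Real.sqrt β)⁻¹ - 1 := Real.log_le_sub_one_of_pos (by positivity)
  rw [Real.log_inv, Real.log_sqrt h0] at h2
  -- -log β / 2 ≤ 1/√β - 1
  have h3 : -Real.log β ≤ 2 * ((Real.sqrt β)⁻¹ - 1) := by linarith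
  have h4 : β * (-Real.log β) ≤ β * (2 * ((Real.sqrt β)⁻¹ - 1)) :=
    mul_le_mul_of_nonneg_left h3 h0
  have hss : Real.sqrt β * Real.sqrt β = β := Real.mul_self_sqrt h0
  have hinv : (Real.sqrt β)⁻¹ * β = Real.sqrt β := by
    rw [inv_mul_eq_div, div_eq_iff (ne_of_gt hs)]
    exact hss.symm
  have h7 : β * (2 * ((Real.sqrt β)⁻¹ - 1)) = 2 * Real.sqrt β - 2 * β := by
    linear_combination 2 * hinv
  have h6 : Real.negMulLog β = β * (-Real.log β) := by rw [Real.negMulLog_def]; ring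
  linarith

lemma core_ineq {ι : Type*} (F : Finset ι) (x y : ι → ℝ)
    (hx : ∀ i ∈ F, 0 ≤ x i) (hy : ∀ i ∈ F, 0 ≤ y i)
    {MA MB : ℝ} (hMA : 0 < MA) (hMB : 0 < MB)
    (hxs : ∑ i ∈ F, x i = MA) (hys : ∑ i ∈ F, y i = MB) :
    ∑ i ∈ F, Real.negMulLog ((x i + y i) / (MA + MB)) ≤
      (MA/(MA+MB)) * ∑ i ∈ F, Real.negMulLog (x i / MA)
      + (MB/(MA+MB)) * Real.log F.card
      + Real.negMulLog (MA/(MA+MB)) + Real.negMulLog (MB/(MA+MB)) := by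
  set θ := MA/(MA+MB) with hθdef
  set β := MB/(MA+MB) with hβdef
  have hMQ : 0 < MA + MB := by linarith
  have hθ : 0 < θ := by positivity
  have hβ : 0 < β := by positivity
  have key : ∀ i ∈ F, Real.negMulLog ((x i + y i) / (MA + MB)) ≤
      (x i / MA) * Real.negMulLog θ + θ * Real.negMulLog (x i / MA)
      + (y i / MB) * Real.negMulLog β + β * Real.negMulLog (y i / MB) := by
    intro i hi
    have hxi := hx i hi; have hyi := hy i hi
    have hdec : (x i + y i) / (MA + MB) = θ * (x i / MA) + β * (y i / MB) := by
      rw [hθdef, hβdef]; field_simp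
    rw [hdec]
    calc Real.negMulLog (θ * (x i / MA) + β * (y i / MB))
        ≤ Real.negMulLog (θ * (x i / MA)) + Real.negMulLog (β * (y i / MB)) :=
          negMulLog_add_le (mul_nonneg (le_of_lt hθ) (div_nonneg hxi (le_of_lt hMA)))
            (mul_nonneg (le_of_lt hβ) (div_nonneg hyi (le_of_lt hMB)))
      _ = (x i / MA) * Real.negMulLog θ + θ * Real.negMulLog (x i / MA)
          + (y i / MB) * Real.negMulLog β + β * Real.negMulLog (y i / MB) := by
          rw [Real.negMulLog_mul, Real.negMulLog_mul]; ring
  have hsum := Finset.sum_le_sum key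
  have hxs1 : ∑ i ∈ F, x i / MA = 1 := by
    rw [← Finset.sum_div, hxs, div_self (ne_of_gt hMA)]
  have hys1 : ∑ i ∈ F, y i / MB = 1 := by
    rw [← Finset.sum_div, hys, div_self (ne_of_gt hMB)]
  have hrhs : ∑ i ∈ F, ((x i / MA) * Real.negMulLog θ + θ * Real.negMulLog (x i / MA)
      + (y i / MB) * Real.negMulLog β + β * Real.negMulLog (y i / MB))
      = Real.negMulLog θ + θ * ∑ i ∈ F, Real.negMulLog (x i / MA)
        + Real.negMulLog β + β * ∑ i ∈ F, Real.negMulLog (y i / MB) := by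
    rw [Finset.sum_add_distrib, Finset.sum_add_distrib, Finset.sum_add_distrib,
      ← Finset.sum_mul, ← Finset.mul_sum, ← Finset.sum_mul, ← Finset.mul_sum, hxs1, hys1]
    ring
  have hmax : ∑ i ∈ F, Real.negMulLog (y i / MB) ≤ Real.log F.card :=
    sum_negMulLog_le F _ (fun i hi => div_nonneg (hy i hi) (le_of_lt hMB)) hys1
  have hβmax : β * ∑ i ∈ F, Real.negMulLog (y i / MB) ≤ β * Real.log F.card :=
    mul_le_mul_of_nonneg_left hmax (le_of_lt hβ)
  rw [hrhs] at hsum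
  linarith


section Plumbing
open MeasureTheory

variable (μ : Measure (EuclideanSpace ℝ (Fin d)))

lemma cubeMeasure_apply (n : ℕ) (m : Fin d → ℤ)
    {S : Set (EuclideanSpace ℝ (Fin d))} (hS : MeasurableSet S) :
    cubeMeasure d n m μ S
      = (μ (dcube d n m))⁻¹ * μ (cubeMap d n m ⁻¹' S ∩ dcube d n m) := by
  rw [cubeMeasure, Measure.map_apply (cubeMap_measurable n m) hS, Measure.smul_apply,
    Measure.restrict_apply (cubeMap_measurable n m hS), smul_eq_mul]

lemma nu_apply {A : Set (EuclideanSpace ℝ (Fin d))} (hA : MeasurableSet A)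
    {T : Set (EuclideanSpace ℝ (Fin d))} (hT : MeasurableSet T) :
    ((μ A)⁻¹ • μ.restrict A) T = (μ A)⁻¹ * μ (T ∩ A) := by
  rw [Measure.smul_apply, Measure.restrict_apply hT, smul_eq_mul]

lemma cubeMeasure_nu_apply [IsFiniteMeasure μ]
    {A : Set (EuclideanSpace ℝ (Fin d))} (hA : MeasurableSet A) (hA0 : μ A ≠ 0)
    (n : ℕ) (m : Fin d → ℤ)
    {S : Set (EuclideanSpace ℝ (Fin d))} (hS : MeasurableSet S) :
    cubeMeasure d n m ((μ A)⁻¹ • μ.restrict A) S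
      = (μ (dcube d n m ∩ A))⁻¹ * μ (cubeMap d n m ⁻¹' S ∩ (dcube d n m ∩ A)) := by
  have hAfin : μ A ≠ ⊤ := measure_ne_top μ A
  rw [cubeMeasure_apply _ n m hS, nu_apply μ hA (measurableSet_dcube n m),
      nu_apply μ hA ((cubeMap_measurable n m hS).inter (measurableSet_dcube n m)),
      Set.inter_assoc]
  rw [ENNReal.mul_inv (Or.inl (ENNReal.inv_ne_zero.2 hAfin)) (Or.inl (ENNReal.inv_ne_top.2 hA0)),
      inv_inv]
  calc μ A * (μ (dcube d n m ∩ A))⁻¹ * ((μ A)⁻¹ * μ (cubeMap d n m ⁻¹' S ∩ (dcube d n m ∩ A)))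
      = (μ A * (μ A)⁻¹) * ((μ (dcube d n m ∩ A))⁻¹ * μ (cubeMap d n m ⁻¹' S ∩ (dcube d n m ∩ A))) := by
        ring
    _ = (μ (dcube d n m ∩ A))⁻¹ * μ (cubeMap d n m ⁻¹' S ∩ (dcube d n m ∩ A)) := by
        rw [ENNReal.mul_inv_cancel hA0 hAfin, one_mul]

lemma pre_inter_dcube_eq_empty {n q : ℕ} {m m' : Fin d → ℤ} (h : m' ∉ Fq d q) :
    cubeMap d n m ⁻¹' (dcube d q m') ∩ dcube d n m = ∅ := by
  rw [Set.eq_empty_iff_forall_notMem]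
  rintro z ⟨hz1, hz2⟩
  have hu : cubeMap d n m z ∈ unitCubeHO d := by
    rw [dcube_eq_preimage] at hz2; exact hz2
  have h2 : cubeMap d n m z ∈ dcube d q m' ∩ unitCubeHO d := ⟨hz1, hu⟩
  rw [dcube_inter_unit_eq_empty h] at h2
  exact h2

lemma sum_measure_pre (n q : ℕ) (m : Fin d → ℤ)
    {S : Set (EuclideanSpace ℝ (Fin d))} (hS : MeasurableSet S) (hSQ : S ⊆ dcube d n m) :
    ∑ m' ∈ Fq d q, μ (cubeMap d n m ⁻¹' (dcube d q m') ∩ S) = μ S := by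
  have hdisj : ((Fq d q : Set (Fin d → ℤ))).PairwiseDisjoint
      (fun m' => cubeMap d n m ⁻¹' (dcube d q m') ∩ S) := by
    intro a _ b _ hab
    exact Disjoint.mono Set.inter_subset_left Set.inter_subset_left
      (Disjoint.preimage _ (pairwise_disjoint_dcube q hab))
  have hmeas : ∀ b ∈ Fq d q, MeasurableSet (cubeMap d n m ⁻¹' (dcube d q b) ∩ S) :=
    fun b _ => (cubeMap_measurable n m (measurableSet_dcube q b)).inter hS
  rw [← measure_biUnion_finset hdisj hmeas]
  congr 1
  apply Set.Subset.antisymm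
  · exact Set.iUnion₂_subset fun m' _ => Set.inter_subset_right
  · intro z hz
    have hzQ : z ∈ dcube d n m := hSQ hz
    have hu : cubeMap d n m z ∈ unitCubeHO d := by
      rw [dcube_eq_preimage] at hzQ; exact hzQ
    obtain ⟨m', hm'⟩ := Set.mem_iUnion.1 (unit_subset_Fq q hu)
    obtain ⟨hm'F, hm'c⟩ := Set.mem_iUnion.1 hm'
    exact Set.mem_biUnion hm'F ⟨hm'c, hz⟩

lemma tsum_measure_dcube_inter (n : ℕ)
    {S : Set (EuclideanSpace ℝ (Fin d))} (hS : MeasurableSet S) :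
    ∑' m : Fin d → ℤ, μ (dcube d n m ∩ S) = μ S := by
  rw [← measure_iUnion (fun a b hab => Disjoint.mono Set.inter_subset_left Set.inter_subset_left
        (pairwise_disjoint_dcube n hab))
      (fun m => (measurableSet_dcube n m).inter hS)]
  rw [← Set.iUnion_inter, iUnion_dcube, Set.univ_inter]

lemma tsum_toReal_measure_dcube_inter [IsFiniteMeasure μ] (n : ℕ)
    {S : Set (EuclideanSpace ℝ (Fin d))} (hS : MeasurableSet S) :
    ∑' m : Fin d → ℤ, (μ (dcube d n m ∩ S)).toReal = (μ S).toReal := by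
  rw [← ENNReal.tsum_toReal_eq (fun m => measure_ne_top _ _), tsum_measure_dcube_inter μ n hS]

lemma summable_toReal_measure_dcube_inter [IsFiniteMeasure μ] (n : ℕ)
    {S : Set (EuclideanSpace ℝ (Fin d))} (hS : MeasurableSet S) :
    Summable fun m : Fin d → ℤ => (μ (dcube d n m ∩ S)).toReal :=
  ENNReal.summable_toReal (by rw [tsum_measure_dcube_inter μ n hS]; exact measure_ne_top μ S)

lemma tsum_toReal_measure_dcube [IsProbabilityMeasure μ] (n : ℕ) :
    ∑' m : Fin d → ℤ, (μ (dcube d n m)).toReal = 1 := by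
  have := tsum_toReal_measure_dcube_inter μ n MeasurableSet.univ
  simpa [Set.inter_univ] using this

lemma summable_toReal_measure_dcube [IsFiniteMeasure μ] (n : ℕ) :
    Summable fun m : Fin d → ℤ => (μ (dcube d n m)).toReal := by
  have := summable_toReal_measure_dcube_inter μ n MeasurableSet.univ
  simpa [Set.inter_univ] using this

lemma negMulLog_term (x : ℝ) : -(x * Real.logb 2 x) = Real.negMulLog x / Real.log 2 := by
  rw [Real.logb, Real.negMulLog_def, div_eq_mul_inv, div_eq_mul_inv]; ring

lemma entropy_eq_sum (ξ : Measure (EuclideanSpace ℝ (Fin d))) (q : ℕ)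
    (h0 : ∀ m' ∉ Fq d q, ξ (dcube d q m') = 0) :
    entropy d ξ q
      = (∑ m' ∈ Fq d q, Real.negMulLog ((ξ (dcube d q m')).toReal)) / Real.log 2 := by
  rw [entropy]
  calc ∑' m' : Fin d → ℤ, -((ξ (dcube d q m')).toReal * Real.logb 2 (ξ (dcube d q m')).toReal)
      = ∑ m' ∈ Fq d q, -((ξ (dcube d q m')).toReal * Real.logb 2 (ξ (dcube d q m')).toReal) := by
        apply tsum_eq_sum
        intro m' hm'
        rw [h0 m' hm']
        simp
    _ = ∑ m' ∈ Fq d q, Real.negMulLog ((ξ (dcube d q m')).toReal) / Real.log 2 :=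
        Finset.sum_congr rfl fun m' _ => negMulLog_term _
    _ = _ := by rw [Finset.sum_div]

lemma dist_le_of_mem_dcube {n : ℕ} {m : Fin d → ℤ}
    {z w : EuclideanSpace ℝ (Fin d)} (hz : z ∈ dcube d n m) (hw : w ∈ dcube d n m) :
    dist z w ≤ Real.sqrt d * (2:ℝ)^(-(n:ℤ)) := by
  have hc : (0:ℝ) < (2:ℝ)^(-(n:ℤ)) := by positivity
  have hcoord : ∀ i, dist (z i) (w i) ≤ (2:ℝ)^(-(n:ℤ)) := by
    intro i
    obtain ⟨a1, b1⟩ := hz i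
    obtain ⟨a2, b2⟩ := hw i
    rw [Real.dist_eq, abs_le]
    constructor <;> nlinarith
  rw [EuclideanSpace.dist_eq]
  have h1 : ∑ i, dist (z i) (w i) ^ 2 ≤ (d:ℝ) * ((2:ℝ)^(-(n:ℤ)))^2 := by
    calc ∑ i, dist (z i) (w i) ^ 2 ≤ ∑ _i : Fin d, ((2:ℝ)^(-(n:ℤ)))^2 :=
          Finset.sum_le_sum fun i _ => by
            have := hcoord i
            nlinarith [dist_nonneg (x := z i) (y := w i)]
      _ = (d:ℝ) * ((2:ℝ)^(-(n:ℤ)))^2 := by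
          rw [Finset.sum_const, Finset.card_univ, Fintype.card_fin, nsmul_eq_mul]
  calc Real.sqrt (∑ i, dist (z i) (w i) ^ 2) ≤ Real.sqrt ((d:ℝ) * ((2:ℝ)^(-(n:ℤ)))^2) :=
        Real.sqrt_le_sqrt h1
    _ = Real.sqrt d * (2:ℝ)^(-(n:ℤ)) := by
        rw [Real.sqrt_mul (Nat.cast_nonneg d), Real.sqrt_sq hc.le]

end Plumbing

section Compare
open MeasureTheory

set_option maxHeartbeats 1000000 in
lemma nentropy_compare (μ : Measure (EuclideanSpace ℝ (Fin d))) [IsProbabilityMeasure μ]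
    {A : Set (EuclideanSpace ℝ (Fin d))} (hA : MeasurableSet A) (hA0 : μ A ≠ 0)
    {n q : ℕ} (hq : 1 ≤ q) (m : Fin d → ℤ) {ε : ℝ} (hε0 : 0 < ε) (hε2 : ε ≤ 1/2)
    (hQA0 : μ (dcube d n m ∩ A) ≠ 0)
    (hθ : (1 - ε) * (μ (dcube d n m)).toReal ≤ (μ (dcube d n m ∩ A)).toReal) :
    nentropy d (cubeMeasure d n m μ) q ≤
      nentropy d (cubeMeasure d n m ((μ A)⁻¹ • μ.restrict A)) q + ε * d + 6 * Real.sqrt ε := by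
  have hfin : ∀ T : Set (EuclideanSpace ℝ (Fin d)), μ T ≠ ⊤ := fun T => measure_ne_top μ T
  have hQmeas : MeasurableSet (dcube d n m) := measurableSet_dcube n m
  have hQ0 : μ (dcube d n m) ≠ 0 := by
    intro h
    exact hQA0 (le_antisymm (le_trans (measure_mono Set.inter_subset_left) h.le) zero_le)
  set Q := dcube d n m with hQdef
  set MAr := (μ (Q ∩ A)).toReal with hMArdef
  set MBr := (μ (Q \ A)).toReal with hMBrdef
  set MQr := (μ Q).toReal with hMQrdef
  have hMA0 : 0 < MAr := ENNReal.toReal_pos hQA0 (hfin _)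
  have hMQ0 : 0 < MQr := ENNReal.toReal_pos hQ0 (hfin _)
  have hMB0 : 0 ≤ MBr := ENNReal.toReal_nonneg
  have hsplitQ : MQr = MAr + MBr := by
    rw [hMArdef, hMBrdef, ← ENNReal.toReal_add (hfin _) (hfin _), measure_inter_add_diff Q hA]
  set pre : (Fin d → ℤ) → Set (EuclideanSpace ℝ (Fin d)) :=
    fun m' => cubeMap d n m ⁻¹' (dcube d q m') with hpredef
  have hpremeas : ∀ m', MeasurableSet (pre m') :=
    fun m' => cubeMap_measurable n m (measurableSet_dcube q m')
  set x : (Fin d → ℤ) → ℝ := fun m' => (μ (pre m' ∩ (Q ∩ A))).toReal with hxdef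
  set y : (Fin d → ℤ) → ℝ := fun m' => (μ (pre m' ∩ (Q \ A))).toReal with hydef
  have hx0 : ∀ m', 0 ≤ x m' := fun m' => ENNReal.toReal_nonneg
  have hy0 : ∀ m', 0 ≤ y m' := fun m' => ENNReal.toReal_nonneg
  have hxy : ∀ m', (μ (pre m' ∩ Q)).toReal = x m' + y m' := by
    intro m'
    rw [hxdef, hydef]
    simp only
    rw [← ENNReal.toReal_add (hfin _) (hfin _)]
    congr 1
    rw [← measure_inter_add_diff (pre m' ∩ Q) hA, Set.inter_assoc, Set.inter_diff_assoc]
  have hxsum : ∑ m' ∈ Fq d q, x m' = MAr := by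
    rw [hxdef, hMArdef]
    simp only
    rw [← ENNReal.toReal_sum (fun a _ => hfin _),
      sum_measure_pre μ n q m (hQmeas.inter hA) Set.inter_subset_left]
  have hysum : ∑ m' ∈ Fq d q, y m' = MBr := by
    rw [hydef, hMBrdef]
    simp only
    rw [← ENNReal.toReal_sum (fun a _ => hfin _),
      sum_measure_pre μ n q m (hQmeas.diff hA) Set.diff_subset]
  have hxle : ∀ m', x m' ≤ MAr :=
    fun m' => ENNReal.toReal_mono (hfin _) (measure_mono Set.inter_subset_right)
  -- entropy identifications
  have hEμ : entropy d (cubeMeasure d n m μ) q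
      = (∑ m' ∈ Fq d q, Real.negMulLog ((x m' + y m') / MQr)) / Real.log 2 := by
    rw [entropy_eq_sum _ q (fun m' hm' => by
      rw [cubeMeasure_apply μ n m (measurableSet_dcube q m'),
        pre_inter_dcube_eq_empty hm', measure_empty, mul_zero])]
    congr 1
    refine Finset.sum_congr rfl fun m' _ => ?_
    congr 1
    rw [cubeMeasure_apply μ n m (measurableSet_dcube q m'), ENNReal.toReal_mul,
      ENNReal.toReal_inv, hxy m', inv_mul_eq_div]
  have hEν : entropy d (cubeMeasure d n m ((μ A)⁻¹ • μ.restrict A)) q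
      = (∑ m' ∈ Fq d q, Real.negMulLog (x m' / MAr)) / Real.log 2 := by
    rw [entropy_eq_sum _ q (fun m' hm' => by
      rw [cubeMeasure_nu_apply μ hA hA0 n m (measurableSet_dcube q m')]
      have hempty : pre m' ∩ (Q ∩ A) = ∅ := by
        rw [← Set.subset_empty_iff]
        rw [← pre_inter_dcube_eq_empty (n := n) (m := m) hm']
        exact Set.inter_subset_inter_right _ Set.inter_subset_left
      rw [hempty, measure_empty, mul_zero])]
    congr 1
    refine Finset.sum_congr rfl fun m' _ => ?_
    congr 1
    rw [cubeMeasure_nu_apply μ hA hA0 n m (measurableSet_dcube q m'), ENNReal.toReal_mul,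
      ENNReal.toReal_inv, inv_mul_eq_div]
  have hL : (0:ℝ) < Real.log 2 := Real.log_pos one_lt_two
  have hLhalf : (1/2:ℝ) ≤ Real.log 2 := by linarith [Real.log_two_gt_d9]
  have hk1 : (1:ℝ) ≤ (q:ℝ) := by exact_mod_cast hq
  have hk0 : (0:ℝ) < (q:ℝ) := by linarith
  set Sν := ∑ m' ∈ Fq d q, Real.negMulLog (x m' / MAr) with hSνdef
  set Sμ := ∑ m' ∈ Fq d q, Real.negMulLog ((x m' + y m') / MQr) with hSμdef
  have hSν0 : 0 ≤ Sν :=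
    Finset.sum_nonneg fun m' _ => Real.negMulLog_nonneg (div_nonneg (hx0 _) hMA0.le)
      ((div_le_one hMA0).2 (hxle m'))
  rw [nentropy, nentropy, hEμ, hEν]
  rcases eq_or_lt_of_le hMB0 with hMB | hMB
  · -- μ(Q \ A) = 0 : the two entropies coincide
    have hMBzero : μ (Q \ A) = 0 := by
      rcases (ENNReal.toReal_eq_zero_iff _).1 hMB.symm with h | h
      · exact h
      · exact absurd h (hfin _)
    have hyzero : ∀ m', y m' = 0 := by
      intro m'
      rw [hydef]
      simp only
      rw [measure_mono_null Set.inter_subset_right hMBzero, ENNReal.toReal_zero]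
    have hMQA : MQr = MAr := by rw [hsplitQ, ← hMB, add_zero]
    have hsame : Sμ = Sν := by
      refine Finset.sum_congr rfl fun m' _ => ?_
      rw [hyzero m', add_zero, hMQA]
    rw [hsame]
    have h1 : (0:ℝ) ≤ ε * d := by positivity
    have h2 : (0:ℝ) ≤ 6 * Real.sqrt ε := by positivity
    linarith
  · -- main case
    have hcore := core_ineq (Fq d q) x y (fun m' _ => hx0 m') (fun m' _ => hy0 m')
      hMA0 hMB hxsum hysum
    rw [← hsplitQ] at hcore
    have hlogcard : Real.log ((Fq d q).card : ℝ) = ((q*d : ℕ) : ℝ) * Real.log 2 := by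
      rw [card_Fq, Nat.cast_pow, Real.log_pow]
      norm_num
    rw [hlogcard] at hcore
    set θ := MAr / MQr with hθdef
    set β := MBr / MQr with hβdef
    have hθpos : 0 < θ := by rw [hθdef]; positivity
    have hθβ : θ + β = 1 := by rw [hθdef, hβdef, ← add_div, ← hsplitQ, div_self hMQ0.ne']
    have hβpos : 0 < β := by rw [hβdef]; positivity
    have hθ1 : θ ≤ 1 := by linarith
    have hβε : β ≤ ε := by
      rw [hβdef, div_le_iff₀ hMQ0]
      nlinarith [hθ]
    clear_value θ β
    have hψθ : Real.negMulLog θ ≤ ε :=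
      le_trans (negMulLog_le_one_sub hθpos hθ1) (by linarith)
    have hψβ : Real.negMulLog β ≤ 2 * Real.sqrt ε :=
      le_trans (negMulLog_le_two_sqrt hβpos.le)
        (by nlinarith [Real.sqrt_le_sqrt hβε, Real.sqrt_nonneg β])
    rw [← hSμdef, ← hSνdef] at hcore
    clear_value Sν Sμ MAr MBr MQr
    have hεsqrt : ε ≤ Real.sqrt ε := by
      have h1 : Real.sqrt ε ≤ 1 := Real.sqrt_le_one.2 (by linarith)
      calc ε = Real.sqrt ε * Real.sqrt ε := (Real.mul_self_sqrt hε0.le).symm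
        _ ≤ Real.sqrt ε * 1 := mul_le_mul_of_nonneg_left h1 (Real.sqrt_nonneg ε)
        _ = Real.sqrt ε := mul_one _
    have hstep1 : Sμ ≤ Sν + ε * (((q*d:ℕ):ℝ) * Real.log 2) + (ε + 2 * Real.sqrt ε) := by
      have ha : θ * Sν ≤ Sν := mul_le_of_le_one_left hSν0 hθ1
      have hb : β * (((q*d:ℕ):ℝ) * Real.log 2) ≤ ε * (((q*d:ℕ):ℝ) * Real.log 2) := by
        apply mul_le_mul_of_nonneg_right hβε
        positivity
      linarith [hcore]
    have hLq : (0:ℝ) < Real.log 2 * (q:ℝ) := by positivity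
    have hLqhalf : (1/2:ℝ) ≤ Real.log 2 * (q:ℝ) := by
      have h' := mul_le_mul_of_nonneg_left hk1 hL.le
      rw [mul_one] at h'
      linarith
    have e1 : Sμ / Real.log 2 / (q:ℝ) = Sμ / (Real.log 2 * (q:ℝ)) := by rw [div_div]
    have e2 : Sν / Real.log 2 / (q:ℝ) = Sν / (Real.log 2 * (q:ℝ)) := by rw [div_div]
    rw [e1, e2]
    have hstep2 : Sμ / (Real.log 2 * (q:ℝ))
        ≤ (Sν + ε * (((q*d:ℕ):ℝ) * Real.log 2) + (ε + 2 * Real.sqrt ε)) / (Real.log 2 * (q:ℝ)) :=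
      (div_le_div_iff_of_pos_right hLq).2 hstep1
    have hstep3 : (Sν + ε * (((q*d:ℕ):ℝ) * Real.log 2) + (ε + 2 * Real.sqrt ε)) / (Real.log 2 * (q:ℝ))
        = Sν / (Real.log 2 * (q:ℝ)) + ε * d + (ε + 2 * Real.sqrt ε) / (Real.log 2 * (q:ℝ)) := by
      push_cast
      field_simp
    have hstep4 : (ε + 2 * Real.sqrt ε) / (Real.log 2 * (q:ℝ)) ≤ (ε + 2 * Real.sqrt ε) / (1/2) := by
      apply div_le_div_of_nonneg_left _ (by norm_num) hLqhalf
      positivity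
    have hstep5 : (ε + 2 * Real.sqrt ε) / (1/2 : ℝ) ≤ 6 * Real.sqrt ε := by
      rw [div_div_eq_mul_div, div_one]
      nlinarith [hεsqrt]
    calc Sμ / (Real.log 2 * (q:ℝ)) ≤ _ := hstep2
      _ = _ := hstep3
      _ ≤ Sν / (Real.log 2 * (q:ℝ)) + ε * d + 6 * Real.sqrt ε := by linarith

end Compare

end WR32
end

set_option maxHeartbeats 4000000 in
/-- **Lemma 3.2.** If `μ` is a weakly `s`-regular probability measure on `[0,1)^d` and
`μ(A) > 0`, then the normalized restriction `μ_A` is weakly `s`-regular. -/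
theorem weakly_regular_subsets_of_positive_measure :
    ∀ d : ℕ, ∀ μ : MeasureTheory.Measure (EuclideanSpace ℝ (Fin d)),
    MeasureTheory.IsProbabilityMeasure μ → μ (unitCubeHO d) = 1 →
    ∀ s : ℝ, WeaklyRegular d μ s →
    ∀ A : Set (EuclideanSpace ℝ (Fin d)), MeasurableSet A → 0 < μ A →
    WeaklyRegular d ((μ A)⁻¹ • μ.restrict A) s := by
  intro d μ hprob hunit s hreg A hAmeas hApos
  classical
  set ν := (μ A)⁻¹ • μ.restrict A with hνdef
  have hfin : ∀ T : Set (EuclideanSpace ℝ (Fin d)), μ T ≠ ⊤ := fun T => measure_ne_top μ T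
  have hA0 : μ A ≠ 0 := hApos.ne'
  have hAfin : μ A ≠ ⊤ := hfin A
  have hνprob : MeasureTheory.IsProbabilityMeasure ν := by
    constructor
    rw [hνdef, WR32.nu_apply μ hAmeas MeasurableSet.univ, Set.univ_inter,
      ENNReal.inv_mul_cancel hA0 hAfin]
  set αr := (μ A).toReal with hαdef
  have hαpos : 0 < αr := ENNReal.toReal_pos hA0 hAfin
  have hα1 : αr ≤ 1 := by
    rw [hαdef]
    exact ENNReal.toReal_le_of_le_ofReal one_pos.le (by simpa using prob_le_one (μ := μ) (s := A))
  have hν_cube : ∀ n : ℕ, ∀ m : Fin d → ℤ,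
      ν (dcube d n m) = (μ A)⁻¹ * μ (dcube d n m ∩ A) :=
    fun n m => WR32.nu_apply μ hAmeas (WR32.measurableSet_dcube n m)
  have hνto : ∀ n : ℕ, ∀ m : Fin d → ℤ,
      (ν (dcube d n m)).toReal = αr⁻¹ * (μ (dcube d n m ∩ A)).toReal := by
    intro n m
    rw [hν_cube n m, ENNReal.toReal_mul, ENNReal.toReal_inv, hαdef]
  intro δ hδ
  rcases le_or_gt δ 1 with hδ1 | hδ1
  swap
  · -- trivial case δ > 1
    refine ⟨0, 1, fun N hN => ?_⟩
    have hNpos : (0:ℝ) < N := by exact_mod_cast hN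
    rw [sRich]
    have key : ∀ n : ℕ, (∑' m : Fin d → ℤ,
        (if 0 < ν (dcube d n m) ∧ nentropy d (cubeMeasure d n m ν) 0 < s - δ
          then (ν (dcube d n m)).toReal else 0)) ≤ 1 := by
      intro n
      have hsum := WR32.summable_toReal_measure_dcube ν n
      have hle : ∀ m : Fin d → ℤ,
          (if 0 < ν (dcube d n m) ∧ nentropy d (cubeMeasure d n m ν) 0 < s - δ
            then (ν (dcube d n m)).toReal else 0) ≤ (ν (dcube d n m)).toReal := by
        intro m; split_ifs; exacts [le_rfl, ENNReal.toReal_nonneg]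
      have hnn : ∀ m : Fin d → ℤ, 0 ≤
          (if 0 < ν (dcube d n m) ∧ nentropy d (cubeMeasure d n m ν) 0 < s - δ
            then (ν (dcube d n m)).toReal else 0) := by
        intro m; split_ifs; exacts [ENNReal.toReal_nonneg, le_rfl]
      calc ∑' m : Fin d → ℤ, _ ≤ ∑' m : Fin d → ℤ, (ν (dcube d n m)).toReal :=
            Summable.tsum_le_tsum hle (hsum.of_nonneg_of_le hnn hle) hsum
        _ = 1 := WR32.tsum_toReal_measure_dcube ν n
    calc (1/(N:ℝ)) * ∑ n ∈ Finset.range N, ∑' m : Fin d → ℤ,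
          (if 0 < ν (dcube d n m) ∧ nentropy d (cubeMeasure d n m ν) 0 < s - δ
            then (ν (dcube d n m)).toReal else 0)
        ≤ (1/(N:ℝ)) * ∑ n ∈ Finset.range N, (1:ℝ) := by
          apply mul_le_mul_of_nonneg_left (Finset.sum_le_sum fun n _ => key n)
          positivity
      _ = 1 := by
          rw [Finset.sum_const, Finset.card_range, nsmul_eq_mul, mul_one]
          field_simp
      _ < δ := hδ1
  -- main case : δ ≤ 1
  set ε : ℝ := min (1/2) ((δ / (2*((d:ℝ)+6)))^2) with hεdef
  have hd6 : (0:ℝ) < (d:ℝ) + 6 := by positivity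
  have hε0 : 0 < ε := lt_min (by norm_num) (by positivity)
  have hε2 : ε ≤ 1/2 := min_le_left _ _
  have hεsqrtle : Real.sqrt ε ≤ δ / (2*((d:ℝ)+6)) := by
    have h1 : ε ≤ (δ / (2*((d:ℝ)+6)))^2 := min_le_right _ _
    calc Real.sqrt ε ≤ Real.sqrt ((δ / (2*((d:ℝ)+6)))^2) := Real.sqrt_le_sqrt h1
      _ = δ / (2*((d:ℝ)+6)) := Real.sqrt_sq (by positivity)
  have hεs : ε ≤ Real.sqrt ε := by
    have h1 : Real.sqrt ε ≤ 1 := Real.sqrt_le_one.2 (by linarith)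
    calc ε = Real.sqrt ε * Real.sqrt ε := (Real.mul_self_sqrt hε0.le).symm
      _ ≤ Real.sqrt ε * 1 := mul_le_mul_of_nonneg_left h1 (Real.sqrt_nonneg ε)
      _ = Real.sqrt ε := mul_one _
  have hloss : ε * (d:ℝ) + 6 * Real.sqrt ε ≤ δ/2 := by
    have h2 : ε * (d:ℝ) + 6 * Real.sqrt ε ≤ ((d:ℝ)+6) * Real.sqrt ε := by
      nlinarith [Real.sqrt_nonneg ε, hεs, (Nat.cast_nonneg d : (0:ℝ) ≤ (d:ℝ))]
    have h3 : ((d:ℝ)+6) * Real.sqrt ε ≤ ((d:ℝ)+6) * (δ/(2*((d:ℝ)+6))) :=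
      mul_le_mul_of_nonneg_left hεsqrtle hd6.le
    have h4 : ((d:ℝ)+6) * (δ/(2*((d:ℝ)+6))) = δ/2 := by field_simp
    linarith
  set ε' : ℝ := min (αr * δ / 4) (δ / 2) with hε'def
  have hε'0 : 0 < ε' := lt_min (by positivity) (by positivity)
  have hε'le : ε' ≤ δ/2 := min_le_right _ _
  have hε'α : αr⁻¹ * ε' ≤ δ/4 := by
    have h1 : ε' ≤ αr * δ / 4 := min_le_left _ _
    have h2 : αr⁻¹ * ε' ≤ αr⁻¹ * (αr * δ / 4) :=
      mul_le_mul_of_nonneg_left h1 (by positivity)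
    have h3 : αr⁻¹ * (αr * δ / 4) = δ/4 := by field_simp
    linarith
  obtain ⟨q, N₀, hμrich⟩ := hreg ε' hε'0
  rcases Nat.eq_zero_or_pos q with hq0 | hqpos
  · -- q = 0
    rcases le_or_gt s δ with hsδ | hsδ
    · -- condition vacuous
      refine ⟨0, 1, fun N hN => ?_⟩
      have hNpos : (0:ℝ) < N := by exact_mod_cast hN
      rw [sRich]
      have hzero : ∀ n : ℕ, ∀ m : Fin d → ℤ,
          (if 0 < ν (dcube d n m) ∧ nentropy d (cubeMeasure d n m ν) 0 < s - δ
            then (ν (dcube d n m)).toReal else 0) = 0 := by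
        intro n m
        apply if_neg
        rintro ⟨-, h2⟩
        rw [nentropy] at h2
        norm_num at h2
        linarith
      have hsimp : ∀ n : ℕ, (∑' m : Fin d → ℤ,
          (if 0 < ν (dcube d n m) ∧ nentropy d (cubeMeasure d n m ν) 0 < s - δ
            then (ν (dcube d n m)).toReal else 0)) = 0 := by
        intro n
        rw [tsum_eq_sum (s := (∅ : Finset (Fin d → ℤ))) (fun m _ => hzero n m)]
        simp
      rw [Finset.sum_congr rfl (fun n _ => hsimp n)]
      simp only [Finset.sum_const, Finset.card_range, smul_zero, mul_zero]
      exact hδ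
    · -- contradiction with μ-richness
      exfalso
      have hμN := hμrich (max N₀ 1) (le_max_left _ _)
      rw [sRich, hq0] at hμN
      set N := max N₀ 1 with hNdef
      have hN1 : 1 ≤ N := le_max_right _ _
      have hNpos : (0:ℝ) < N := by exact_mod_cast hN1
      have hone : ∀ n : ℕ, (∑' m : Fin d → ℤ,
          (if 0 < μ (dcube d n m) ∧ nentropy d (cubeMeasure d n m μ) 0 < s - ε'
            then (μ (dcube d n m)).toReal else 0)) = 1 := by
        intro n
        have heq : ∀ m : Fin d → ℤ,
            (if 0 < μ (dcube d n m) ∧ nentropy d (cubeMeasure d n m μ) 0 < s - ε'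
              then (μ (dcube d n m)).toReal else 0) = (μ (dcube d n m)).toReal := by
          intro m
          by_cases hμQ : 0 < μ (dcube d n m)
          · rw [if_pos]
            refine ⟨hμQ, ?_⟩
            rw [nentropy]
            norm_num
            linarith
          · rw [if_neg (fun hc => hμQ hc.1)]
            have : μ (dcube d n m) = 0 := by
              by_contra hne
              exact hμQ (zero_lt_iff.2 hne)
            rw [this, ENNReal.toReal_zero]
        rw [tsum_congr heq]
        exact WR32.tsum_toReal_measure_dcube μ n
      rw [Finset.sum_congr rfl (fun n _ => hone n)] at hμN
      rw [Finset.sum_const, Finset.card_range, nsmul_eq_mul, mul_one] at hμN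
      rw [one_div, inv_mul_cancel₀ hNpos.ne'] at hμN
      linarith
  -- q ≥ 1
  -- inner and outer regularity
  have hofReal0 : (ENNReal.ofReal (αr*ε*δ/16)) ≠ 0 := (ENNReal.ofReal_pos.2 (by positivity)).ne'
  obtain ⟨K, hKA, hKcomp, hKsmall⟩ := hAmeas.exists_isCompact_diff_lt hAfin hofReal0
  obtain ⟨U, hAU, hUopen, hUsmall⟩ := Set.exists_isOpen_lt_of_lt A
    (μ A + ENNReal.ofReal (αr*ε*δ/16)) (ENNReal.lt_add_right hAfin hofReal0)
  set S := U \ K with hSdef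
  have hSmeas : MeasurableSet S := hUopen.measurableSet.diff hKcomp.isClosed.measurableSet
  have hUA : μ (U \ A) < ENNReal.ofReal (αr*ε*δ/16) := by
    have h1 : μ (U \ A) + μ A = μ U := by
      have h2 := measure_diff_add_inter (μ := μ) U hAmeas
      rwa [Set.inter_eq_right.2 hAU] at h2
    have h3 : μ (U \ A) + μ A < ENNReal.ofReal (αr*ε*δ/16) + μ A := by
      rw [h1, add_comm (ENNReal.ofReal (αr*ε*δ/16)) (μ A)]
      exact hUsmall
    exact (ENNReal.add_lt_add_iff_right hAfin).1 h3
  have hSsmall : (μ S).toReal < αr*ε*δ/8 := by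
    have hsub : S ⊆ (U \ A) ∪ (A \ K) := by
      rintro z ⟨hzU, hzK⟩
      by_cases hzA : z ∈ A
      · exact Or.inr ⟨hzA, hzK⟩
      · exact Or.inl ⟨hzU, hzA⟩
    have h1 : μ S ≤ μ (U \ A) + μ (A \ K) :=
      le_trans (measure_mono hsub) (measure_union_le _ _)
    have h2 : μ S < ENNReal.ofReal (αr*ε*δ/16) + ENNReal.ofReal (αr*ε*δ/16) :=
      lt_of_le_of_lt h1 (ENNReal.add_lt_add hUA hKsmall)
    rw [← ENNReal.ofReal_add (by positivity) (by positivity)] at h2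
    have h3 : αr*ε*δ/16 + αr*ε*δ/16 = αr*ε*δ/8 := by ring
    rw [h3] at h2
    exact (ENNReal.lt_ofReal_iff_toReal_lt (hfin S)).1 h2
  obtain ⟨δth, hδth, hthick⟩ :=
    hKcomp.exists_thickening_subset_open hUopen (hKA.trans hAU)
  -- choose n₁
  obtain ⟨n₁, hn₁⟩ := exists_pow_lt_of_lt_one
    (show (0:ℝ) < δth / (Real.sqrt d + 1) by positivity) (by norm_num : (1/2:ℝ) < 1)
  have hsmalldiam : ∀ n : ℕ, n₁ ≤ n → Real.sqrt d * (2:ℝ)^(-(n:ℤ)) < δth := by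
    intro n hn
    have h1 : (2:ℝ)^(-(n:ℤ)) = (1/2:ℝ)^n := by
      rw [zpow_neg, zpow_natCast, one_div, inv_pow]
    have h2 : ((1/2:ℝ))^n ≤ ((1/2:ℝ))^n₁ :=
      pow_le_pow_of_le_one (by norm_num) (by norm_num) hn
    have h3 : Real.sqrt d * (2:ℝ)^(-(n:ℤ)) ≤ (Real.sqrt d + 1) * ((1/2:ℝ))^n₁ := by
      rw [h1]
      have hs0 : (0:ℝ) ≤ Real.sqrt d := Real.sqrt_nonneg _
      have hp0 : (0:ℝ) ≤ ((1/2:ℝ))^n := by positivity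
      nlinarith
    have h4 : (Real.sqrt d + 1) * ((1/2:ℝ))^n₁ < (Real.sqrt d + 1) * (δth / (Real.sqrt d + 1)) := by
      apply mul_lt_mul_of_pos_left hn₁
      positivity
    have h5 : (Real.sqrt d + 1) * (δth / (Real.sqrt d + 1)) = δth := by
      field_simp
    linarith
  have hQU : ∀ n : ℕ, n₁ ≤ n → ∀ m : Fin d → ℤ,
      (dcube d n m ∩ K).Nonempty → dcube d n m ⊆ U := by
    rintro n hn m ⟨z₀, hz₀Q, hz₀K⟩ z hz
    apply hthick
    rw [Metric.mem_thickening_iff]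
    exact ⟨z₀, hz₀K, lt_of_le_of_lt (WR32.dist_le_of_mem_dcube hz hz₀Q) (hsmalldiam n hn)⟩
  -- choose N₀
  refine ⟨q, max (max N₀ 1) (Nat.ceil ((8*(n₁:ℝ))/δ) + 1), fun N hN => ?_⟩
  have hNN₀ : N₀ ≤ N := le_trans (le_trans (le_max_left _ _) (le_max_left _ _)) hN
  have hN1 : 1 ≤ N := le_trans (le_trans (le_max_right _ _) (le_max_left _ _)) hN
  have hNpos : (0:ℝ) < N := by exact_mod_cast hN1
  have hNn₁ : (n₁:ℝ)/N ≤ δ/8 := by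
    have h1 : (Nat.ceil ((8*(n₁:ℝ))/δ) : ℕ) ≤ N :=
      le_trans (Nat.le_succ _) (le_trans (le_max_right _ _) hN)
    have h2 : (8*(n₁:ℝ))/δ ≤ N :=
      le_trans (Nat.le_ceil _) (by exact_mod_cast h1)
    rw [div_le_div_iff₀ hNpos (by norm_num : (0:ℝ) < 8)]
    rw [div_le_iff₀ hδ] at h2
    linarith
  have hμN := hμrich N hNN₀
  rw [sRich] at hμN ⊢
  -- the three families
  set Iν : ℕ → (Fin d → ℤ) → ℝ := fun n m =>
    if 0 < ν (dcube d n m) ∧ nentropy d (cubeMeasure d n m ν) q < s - δ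
      then (ν (dcube d n m)).toReal else 0 with hIdef
  set J1 : ℕ → (Fin d → ℤ) → ℝ := fun n m =>
    if (μ (dcube d n m ∩ A)).toReal < (1-ε) * (μ (dcube d n m)).toReal
      then (ν (dcube d n m)).toReal else 0 with hJ1def
  set J2 : ℕ → (Fin d → ℤ) → ℝ := fun n m =>
    if 0 < μ (dcube d n m) ∧ nentropy d (cubeMeasure d n m μ) q < s - ε'
      then (μ (dcube d n m)).toReal else 0 with hJ2def
  have hI0 : ∀ n m, 0 ≤ Iν n m := by
    intro n m; rw [hIdef]; dsimp only; split_ifs; exacts [ENNReal.toReal_nonneg, le_rfl]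
  have hJ10 : ∀ n m, 0 ≤ J1 n m := by
    intro n m; rw [hJ1def]; dsimp only; split_ifs; exacts [ENNReal.toReal_nonneg, le_rfl]
  have hJ20 : ∀ n m, 0 ≤ J2 n m := by
    intro n m; rw [hJ2def]; dsimp only; split_ifs; exacts [ENNReal.toReal_nonneg, le_rfl]
  have hIle : ∀ n m, Iν n m ≤ (ν (dcube d n m)).toReal := by
    intro n m; rw [hIdef]; dsimp only; split_ifs; exacts [le_rfl, ENNReal.toReal_nonneg]
  have hJ1le : ∀ n m, J1 n m ≤ (ν (dcube d n m)).toReal := by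
    intro n m; rw [hJ1def]; dsimp only; split_ifs; exacts [le_rfl, ENNReal.toReal_nonneg]
  have hJ2le : ∀ n m, J2 n m ≤ (μ (dcube d n m)).toReal := by
    intro n m; rw [hJ2def]; dsimp only; split_ifs; exacts [le_rfl, ENNReal.toReal_nonneg]
  have hνsum : ∀ n, Summable fun m : Fin d → ℤ => (ν (dcube d n m)).toReal :=
    fun n => WR32.summable_toReal_measure_dcube ν n
  have hμsum : ∀ n, Summable fun m : Fin d → ℤ => (μ (dcube d n m)).toReal :=
    fun n => WR32.summable_toReal_measure_dcube μ n
  have hIsmbl : ∀ n, Summable (Iν n) :=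
    fun n => (hνsum n).of_nonneg_of_le (hI0 n) (hIle n)
  have hJ1smbl : ∀ n, Summable (J1 n) :=
    fun n => (hνsum n).of_nonneg_of_le (hJ10 n) (hJ1le n)
  have hJ2smbl : ∀ n, Summable (J2 n) :=
    fun n => (hμsum n).of_nonneg_of_le (hJ20 n) (hJ2le n)
  -- pointwise splitting
  have hsplit : ∀ n m, Iν n m ≤ J1 n m + J2 n m * αr⁻¹ := by
    intro n m
    by_cases hI : 0 < ν (dcube d n m) ∧ nentropy d (cubeMeasure d n m ν) q < s - δ
    · obtain ⟨hν0, hent⟩ := hI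
      have hQA0 : μ (dcube d n m ∩ A) ≠ 0 := by
        intro hz
        rw [hν_cube n m, hz, mul_zero] at hν0
        exact lt_irrefl _ hν0
      by_cases hbad : (μ (dcube d n m ∩ A)).toReal < (1-ε) * (μ (dcube d n m)).toReal
      · have hJ1v : J1 n m = (ν (dcube d n m)).toReal := by
          rw [hJ1def]; dsimp only; rw [if_pos hbad]
        have hIv : Iν n m = (ν (dcube d n m)).toReal := by
          rw [hIdef]; dsimp only; rw [if_pos ⟨hν0, hent⟩]
        have := mul_nonneg (hJ20 n m) (by positivity : (0:ℝ) ≤ αr⁻¹)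
        linarith
      · -- good density: use entropy comparison
        have hcmp := WR32.nentropy_compare μ hAmeas hA0 hqpos m hε0 hε2 hQA0 (not_lt.1 hbad)
        rw [← hνdef] at hcmp
        have hμQ0 : 0 < μ (dcube d n m) := by
          rw [zero_lt_iff]
          intro hz
          exact hQA0 (le_antisymm (le_trans (measure_mono Set.inter_subset_left) hz.le) zero_le)
        have hent2 : nentropy d (cubeMeasure d n m μ) q < s - ε' := by
          have h1 : nentropy d (cubeMeasure d n m μ) q
              ≤ nentropy d (cubeMeasure d n m ν) q + (ε * (d:ℝ) + 6 * Real.sqrt ε) := by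
            linarith [hcmp]
          linarith
        have hJ2v : J2 n m = (μ (dcube d n m)).toReal := by
          rw [hJ2def]; dsimp only; rw [if_pos ⟨hμQ0, hent2⟩]
        have hIv : Iν n m = (ν (dcube d n m)).toReal := by
          rw [hIdef]; dsimp only; rw [if_pos ⟨hν0, hent⟩]
        have hνμ : (ν (dcube d n m)).toReal ≤ (μ (dcube d n m)).toReal * αr⁻¹ := by
          rw [hνto n m]
          have h1 : (μ (dcube d n m ∩ A)).toReal ≤ (μ (dcube d n m)).toReal :=
            ENNReal.toReal_mono (hfin _) (measure_mono Set.inter_subset_left)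
          have h2 := mul_le_mul_of_nonneg_left h1 (by positivity : (0:ℝ) ≤ αr⁻¹)
          linarith [h2]
        rw [hIv, hJ2v]
        linarith [hJ10 n m]
    · rw [hIdef]; dsimp only; rw [if_neg hI]
      have := mul_nonneg (hJ20 n m) (by positivity : (0:ℝ) ≤ αr⁻¹)
      linarith [hJ10 n m]
  -- J1 tsum bound
  have hT1 : ∀ n, (∑' m, J1 n m) ≤ (if n < n₁ then (1:ℝ) else δ/8) := by
    intro n
    by_cases hn : n < n₁
    · rw [if_pos hn]
      calc (∑' m, J1 n m) ≤ ∑' m : Fin d → ℤ, (ν (dcube d n m)).toReal :=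
            Summable.tsum_le_tsum (hJ1le n) (hJ1smbl n) (hνsum n)
        _ = 1 := WR32.tsum_toReal_measure_dcube ν n
    · rw [if_neg hn]
      push_neg at hn
      have hptwise : ∀ m, J1 n m ≤ (αr * ε)⁻¹ * (μ (dcube d n m ∩ S)).toReal := by
        intro m
        rw [hJ1def]; dsimp only
        split_ifs with hbad
        · rw [hνto n m]
          have hMAS : (μ (dcube d n m ∩ A)).toReal ≤ ε⁻¹ * (μ (dcube d n m ∩ S)).toReal := by
            by_cases hKint : (dcube d n m ∩ K).Nonempty
            · have hQsubU := hQU n hn m hKint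
              have hsubS : dcube d n m \ A ⊆ dcube d n m ∩ S := by
                rintro z ⟨hzQ, hzA⟩
                exact ⟨hzQ, hQsubU hzQ, fun hzK => hzA (hKA hzK)⟩
              have hMB : (μ (dcube d n m \ A)).toReal ≤ (μ (dcube d n m ∩ S)).toReal :=
                ENNReal.toReal_mono (hfin _) (measure_mono hsubS)
              have hsplitQ : (μ (dcube d n m)).toReal
                  = (μ (dcube d n m ∩ A)).toReal + (μ (dcube d n m \ A)).toReal := by
                rw [← ENNReal.toReal_add (hfin _) (hfin _), measure_inter_add_diff _ hAmeas]
              have h1 : ε * (μ (dcube d n m ∩ A)).toReal ≤ (μ (dcube d n m \ A)).toReal := by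
                nlinarith [hbad, hsplitQ, ENNReal.toReal_nonneg
                  (a := μ (dcube d n m \ A)), hε2]
              rw [← mul_le_mul_iff_right₀ hε0, ← mul_assoc, mul_inv_cancel₀ hε0.ne', one_mul]
              linarith
            · have hsubS : dcube d n m ∩ A ⊆ dcube d n m ∩ S := by
                rintro z ⟨hzQ, hzA⟩
                refine ⟨hzQ, hAU hzA, fun hzK => hKint ⟨z, hzQ, hzK⟩⟩
              have h1 : (μ (dcube d n m ∩ A)).toReal ≤ (μ (dcube d n m ∩ S)).toReal :=
                ENNReal.toReal_mono (hfin _) (measure_mono hsubS)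
              have h2 : (1:ℝ) ≤ ε⁻¹ := by
                rw [le_inv_comm₀]
                · linarith
                · norm_num
                · exact hε0
              nlinarith [ENNReal.toReal_nonneg (a := μ (dcube d n m ∩ S))]
          rw [mul_inv]
          calc αr⁻¹ * (μ (dcube d n m ∩ A)).toReal
              ≤ αr⁻¹ * (ε⁻¹ * (μ (dcube d n m ∩ S)).toReal) :=
                mul_le_mul_of_nonneg_left hMAS (by positivity)
            _ = αr⁻¹ * ε⁻¹ * (μ (dcube d n m ∩ S)).toReal := by ring
        · positivity
      calc (∑' m, J1 n m)
          ≤ ∑' m : Fin d → ℤ, (αr * ε)⁻¹ * (μ (dcube d n m ∩ S)).toReal :=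
            Summable.tsum_le_tsum hptwise (hJ1smbl n)
              ((WR32.summable_toReal_measure_dcube_inter μ n hSmeas).mul_left _)
        _ = (αr * ε)⁻¹ * ∑' m : Fin d → ℤ, (μ (dcube d n m ∩ S)).toReal := by
            rw [tsum_mul_left]
        _ = (αr * ε)⁻¹ * (μ S).toReal := by
            rw [WR32.tsum_toReal_measure_dcube_inter μ n hSmeas]
        _ ≤ (αr * ε)⁻¹ * (αr*ε*δ/8) :=
            mul_le_mul_of_nonneg_left hSsmall.le (by positivity)
        _ = δ/8 := by field_simp
  -- J2 tsum bound
  have hT2 : ∀ n, (∑' m, J2 n m * αr⁻¹) = (∑' m, J2 n m) * αr⁻¹ := fun n => tsum_mul_right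
  -- assemble
  have hTle : ∀ n, (∑' m, Iν n m) ≤ (∑' m, J1 n m) + (∑' m, J2 n m) * αr⁻¹ := by
    intro n
    calc (∑' m, Iν n m) ≤ ∑' m, (J1 n m + J2 n m * αr⁻¹) :=
          Summable.tsum_le_tsum (hsplit n) (hIsmbl n)
            ((hJ1smbl n).add ((hJ2smbl n).mul_right _))
      _ = (∑' m, J1 n m) + (∑' m, J2 n m * αr⁻¹) :=
          Summable.tsum_add (hJ1smbl n) ((hJ2smbl n).mul_right _)
      _ = (∑' m, J1 n m) + (∑' m, J2 n m) * αr⁻¹ := by rw [hT2 n]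
  have hsum1 : ∑ n ∈ Finset.range N, (if n < n₁ then (1:ℝ) else δ/8) ≤ (n₁:ℝ) + N * (δ/8) := by
    have h1 : ∀ n ∈ Finset.range N, (if n < n₁ then (1:ℝ) else δ/8)
        ≤ (if n < n₁ then (1:ℝ) else 0) + δ/8 := by
      intro n _
      split_ifs <;> [linarith; simp]
    calc ∑ n ∈ Finset.range N, (if n < n₁ then (1:ℝ) else δ/8)
        ≤ ∑ n ∈ Finset.range N, ((if n < n₁ then (1:ℝ) else 0) + δ/8) :=
          Finset.sum_le_sum h1
      _ = (∑ n ∈ Finset.range N, (if n < n₁ then (1:ℝ) else 0)) + N * (δ/8) := by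
          rw [Finset.sum_add_distrib, Finset.sum_const, Finset.card_range, nsmul_eq_mul]
      _ ≤ (n₁:ℝ) + N * (δ/8) := by
          have h2 : ∑ n ∈ Finset.range N, (if n < n₁ then (1:ℝ) else 0)
              ≤ ∑ n ∈ Finset.range n₁, (1:ℝ) := by
            rw [← Finset.sum_filter]
            apply Finset.sum_le_sum_of_subset_of_nonneg
            · intro n hn
              rw [Finset.mem_filter] at hn
              exact Finset.mem_range.2 hn.2
            · intro n _ _
              norm_num
          rw [Finset.sum_const, Finset.card_range, nsmul_eq_mul, mul_one] at h2
          linarith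
  have hμbound : ∑ n ∈ Finset.range N, (∑' m, J2 n m) < N * ε' := by
    have h1 : (1/(N:ℝ)) * ∑ n ∈ Finset.range N, (∑' m, J2 n m) < ε' := hμN
    rw [one_div] at h1
    have h2 := mul_lt_mul_of_pos_left h1 hNpos
    rw [← mul_assoc, mul_inv_cancel₀ hNpos.ne', one_mul] at h2
    exact h2
  have hJ2nn : ∀ n, 0 ≤ (∑' m, J2 n m) := fun n => tsum_nonneg (hJ20 n)
  -- final computation
  calc (1/(N:ℝ)) * ∑ n ∈ Finset.range N, (∑' m, Iν n m)
      ≤ (1/(N:ℝ)) * ∑ n ∈ Finset.range N, ((if n < n₁ then (1:ℝ) else δ/8) + (∑' m, J2 n m) * αr⁻¹) := by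
        apply mul_le_mul_of_nonneg_left _ (by positivity)
        apply Finset.sum_le_sum
        intro n _
        have := hTle n
        have := hT1 n
        linarith
    _ = (1/(N:ℝ)) * ((∑ n ∈ Finset.range N, (if n < n₁ then (1:ℝ) else δ/8))
          + (∑ n ∈ Finset.range N, (∑' m, J2 n m)) * αr⁻¹) := by
        rw [Finset.sum_add_distrib, Finset.sum_mul]
    _ ≤ (1/(N:ℝ)) * (((n₁:ℝ) + N * (δ/8)) + (N * ε') * αr⁻¹) := by
        apply mul_le_mul_of_nonneg_left _ (by positivity)
        have h3 : (∑ n ∈ Finset.range N, (∑' m, J2 n m)) * αr⁻¹ ≤ (N * ε') * αr⁻¹ :=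
          mul_le_mul_of_nonneg_right hμbound.le (by positivity)
        linarith [hsum1]
    _ = (n₁:ℝ)/N + δ/8 + ε' * αr⁻¹ := by
        field_simp
    _ < δ := by
        have h4 : ε' * αr⁻¹ ≤ δ/4 := by rw [mul_comm]; exact hε'α
        linarith [hNn₁]
end

section
/- Given β ∈ (0, π/2), there is a constant C = C(β) > 0 such that the following holds for every k ∈ ℕ: if A ⊂ [0,1]² is k-discrete and for each a ∈ A there is a direction v ∈ S¹ such that X(a,β,v) ∩ A ∖ {a} = ∅, then #A ≤ C·2^k. -/
open MeasureTheory Metric Set Filter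
open scoped ENNReal NNReal Topology

namespace KTaux

noncomputable def perp (v : Plane) : Plane := (EuclideanSpace.equiv (Fin 2) ℝ).symm ![-(v 1), v 0]

lemma inner_expand (x y : Plane) : (inner ℝ x y : ℝ) = x 0 * y 0 + x 1 * y 1 := by
  simp [PiLp.inner_apply, Fin.sum_univ_two, RCLike.inner_apply, mul_comm]

lemma norm_sq_expand (x : Plane) : ‖x‖^2 = x 0^2 + x 1^2 := by
  rw [← real_inner_self_eq_norm_sq, inner_expand]; ring

lemma coord_abs_le_norm (x : Plane) (i : Fin 2) : |x i| ≤ ‖x‖ := by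
  have key : ∀ j : Fin 2, |x j| ^ 2 ≤ ‖x‖ ^ 2 → |x j| ≤ ‖x‖ := by
    intro j h
    nlinarith [abs_nonneg (x j), norm_nonneg x]
  fin_cases i
  · exact key 0 (by rw [sq_abs]; nlinarith [norm_sq_expand x, sq_nonneg (x 1)])
  · exact key 1 (by rw [sq_abs]; nlinarith [norm_sq_expand x, sq_nonneg (x 0)])

lemma norm_perp (v : Plane) : ‖perp v‖ = ‖v‖ := by
  have h1 := norm_sq_expand v
  have h2 := norm_sq_expand (perp v)
  have e0 : perp v 0 = -(v 1) := rfl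
  have e1 : perp v 1 = v 0 := rfl
  rw [e0, e1] at h2
  nlinarith [norm_nonneg v, norm_nonneg (perp v)]

lemma lagrange (u v : Plane) (hv : ‖v‖ = 1) :
    (inner ℝ u v : ℝ)^2 + (inner ℝ u (perp v) : ℝ)^2 = ‖u‖^2 := by
  have h1 := norm_sq_expand v
  rw [hv] at h1
  rw [inner_expand, inner_expand, norm_sq_expand]
  show _ + (u 0 * (-(v 1)) + u 1 * (v 0))^2 = _
  nlinarith [h1]

lemma inner_bound_of_not_cone {a b v : Plane} {β : ℝ} (hβ0 : 0 < β) (hv : ‖v‖ = 1)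
    (hab : b ≠ a) (hnc : b ∉ cone a β v) :
    |(inner ℝ (b - a) v : ℝ)| ≤ Real.cos β * ‖b - a‖ := by
  have hun : 0 < ‖b - a‖ := norm_pos_iff.mpr (sub_ne_zero.mpr hab)
  simp only [cone, Set.mem_setOf_eq, not_and, not_or, not_lt] at hnc
  obtain ⟨h1, h2⟩ := hnc hab
  have c1 : Real.cos (InnerProductGeometry.angle (b - a) v) ≤ Real.cos β :=
    Real.cos_le_cos_of_nonneg_of_le_pi hβ0.le (InnerProductGeometry.angle_le_pi _ _) h1
  have c2 : Real.cos (InnerProductGeometry.angle (b - a) (-v)) ≤ Real.cos β :=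
    Real.cos_le_cos_of_nonneg_of_le_pi hβ0.le (InnerProductGeometry.angle_le_pi _ _) h2
  rw [InnerProductGeometry.cos_angle, hv, mul_one] at c1
  rw [InnerProductGeometry.cos_angle, norm_neg, hv, mul_one, inner_neg_right] at c2
  rw [abs_le]
  constructor
  · have := (div_le_iff₀ hun).mp c2
    linarith
  · have := (div_le_iff₀ hun).mp c1
    linarith

lemma pairwise_inner {a b v w : Plane} {β : ℝ} (hβ0 : 0 < β) (hβ2 : β < Real.pi / 2)
    (hv : ‖v‖ = 1) (hab : b ≠ a) (hnc : b ∉ cone a β v)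
    (hw : ‖perp v - w‖ < Real.sin β / 2) :
    Real.sin β / 2 * ‖b - a‖ ≤ |(inner ℝ (b - a) w : ℝ)| := by
  set u := b - a with hu
  have hun : 0 < ‖u‖ := norm_pos_iff.mpr (sub_ne_zero.mpr hab)
  have h1 : |(inner ℝ u v : ℝ)| ≤ Real.cos β * ‖u‖ := inner_bound_of_not_cone hβ0 hv hab hnc
  have hL := lagrange u v hv
  have hsin : 0 < Real.sin β := Real.sin_pos_of_pos_of_lt_pi hβ0 (by linarith [Real.pi_pos])
  have hcos : 0 ≤ Real.cos β := Real.cos_nonneg_of_mem_Icc ⟨by linarith [Real.pi_pos], hβ2.le⟩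
  have hcs : Real.sin β ^2 + Real.cos β ^2 = 1 := Real.sin_sq_add_cos_sq β
  have hI2 : (inner ℝ u v : ℝ)^2 ≤ (Real.cos β * ‖u‖)^2 := by
    nlinarith [sq_abs (inner ℝ u v : ℝ), abs_nonneg (inner ℝ u v : ℝ)]
  have h2 : Real.sin β * ‖u‖ ≤ |(inner ℝ u (perp v) : ℝ)| := by
    nlinarith [sq_abs (inner ℝ u (perp v) : ℝ), abs_nonneg (inner ℝ u (perp v) : ℝ), hun, hsin]
  have h3 : (inner ℝ u w : ℝ) = (inner ℝ u (perp v) : ℝ) - (inner ℝ u (perp v - w) : ℝ) := by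
    rw [inner_sub_right]; ring
  have h4 : |(inner ℝ u (perp v - w) : ℝ)| ≤ ‖u‖ * ‖perp v - w‖ := abs_real_inner_le_norm _ _
  have h5 : |(inner ℝ u (perp v) : ℝ)| - |(inner ℝ u (perp v - w) : ℝ)| ≤ |(inner ℝ u w : ℝ)| := by
    rw [h3]; exact abs_sub_abs_le_abs_sub _ _
  have h6 : ‖u‖ * ‖perp v - w‖ ≤ ‖u‖ * (Real.sin β / 2) :=
    mul_le_mul_of_nonneg_left hw.le (norm_nonneg u)
  linarith

end KTaux

/-- **Lemma 4.1.** (discrete conical density). Given `β ∈ (0, π/2)` there is `C = C(β) > 0`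
such that: if `A ⊆ [0,1]²` is `k`-discrete and each `a ∈ A` has a direction `v ∈ S¹` with
`X(a,β,v) ∩ A \ {a} = ∅`, then `#A ≤ C·2^k`. -/
theorem discrete_dense_radial_projection :
    ∀ β : ℝ, β ∈ Set.Ioo 0 (Real.pi / 2) →
    ∃ C : ℝ, 0 < C ∧ ∀ k : ℕ, ∀ A : Set Plane, A ⊆ unitSquare → kDiscrete A k →
      (∀ a ∈ A, ∃ v : Plane, ‖v‖ = 1 ∧ cone a β v ∩ (A \ {a}) = ∅) →
      (Nat.card ↥A : ℝ) ≤ C * 2 ^ k := by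
  intro β hβ
  obtain ⟨hβ0, hβ2⟩ := hβ
  have hsin : 0 < Real.sin β := Real.sin_pos_of_pos_of_lt_pi hβ0 (by linarith [Real.pi_pos])
  set s := Real.sin β with hs
  have hs1 : s ≤ 1 := Real.sin_le_one β
  obtain ⟨T, hT⟩ : ∃ T : Finset Plane,
      Metric.sphere (0:Plane) 1 ⊆ ⋃ u ∈ T, Metric.ball u (s/2) := by
    obtain ⟨T, hT⟩ := (isCompact_sphere (0:Plane) 1).elim_finite_subcover
      (fun u : Plane => Metric.ball u (s/2)) (fun u => Metric.isOpen_ball)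
      (fun x _ => Set.mem_iUnion.mpr ⟨x, Metric.mem_ball_self (by positivity)⟩)
    exact ⟨T, hT⟩
  refine ⟨((T.card : ℝ) + 1) * 4 * (16 / s + 3), by positivity, ?_⟩
  intro k A hA hdisc hcone
  classical
  choose! v hv1 hv2 using hcone
  have hw_mem : ∀ a, a ∈ A → ∃ u, u ∈ T ∧ ‖KTaux.perp (v a) - u‖ < s / 2 := by
    intro a ha
    have hsp : KTaux.perp (v a) ∈ Metric.sphere (0:Plane) 1 := by
      rw [mem_sphere_iff_norm, sub_zero, KTaux.norm_perp, hv1 a ha]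
    obtain ⟨u, hu, hball⟩ := Set.mem_iUnion₂.mp (hT hsp)
    exact ⟨u, hu, by rwa [Metric.mem_ball, dist_eq_norm] at hball⟩
  choose! t ht1 ht2 using hw_mem
  set P : ℝ := (2:ℝ)^k with hP
  have hP1 : (1:ℝ) ≤ P := one_le_pow₀ one_le_two
  have hP0 : (0:ℝ) < P := by positivity
  set δ : ℝ := s / 2 * P⁻¹ with hδdef
  have hδ0 : 0 < δ := by positivity
  set M : ℤ := ⌈4 / δ⌉ with hMdef
  have hM1 : (1:ℤ) ≤ M := Int.ceil_pos.mpr (by positivity)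
  set Φ : Plane → Plane × ℤ × Bool × Bool := fun a =>
    (t a, ⌊(inner ℝ a (t a) : ℝ) / δ⌋,
      decide (⌊a 0 * P⌋ % 2 = 0), decide (⌊a 1 * P⌋ % 2 = 0)) with hΦ
  have hinj : Set.InjOn Φ A := by
    intro a ha b hb hab
    by_contra hne
    simp only [hΦ, Prod.mk.injEq] at hab
    obtain ⟨e1, e2, e3, e4⟩ := hab
    have hbne : b ≠ a := fun h => hne h.symm
    have hnc : b ∉ cone a β (v a) := by
      intro hc
      have hmem : b ∈ cone a β (v a) ∩ (A \ {a}) := ⟨hc, hb, hbne⟩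
      rw [hv2 a ha] at hmem
      exact hmem
    have key : s / 2 * ‖b - a‖ ≤ |(inner ℝ (b - a) (t a) : ℝ)| :=
      KTaux.pairwise_inner hβ0 hβ2 (hv1 a ha) hbne hnc (ht2 a ha)
    have hfd : |(inner ℝ b (t b) : ℝ) - (inner ℝ a (t a) : ℝ)| < δ := by
      have h1 := Int.floor_le ((inner ℝ a (t a) : ℝ)/δ)
      have h2 := Int.lt_floor_add_one ((inner ℝ a (t a) : ℝ)/δ)
      have h3 := Int.floor_le ((inner ℝ b (t b) : ℝ)/δ)
      have h4 := Int.lt_floor_add_one ((inner ℝ b (t b) : ℝ)/δ)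
      rw [e2] at h1 h2
      rw [abs_sub_lt_iff]
      constructor
      · have k1 : ((inner ℝ b (t b) : ℝ) - (inner ℝ a (t a) : ℝ))/δ < 1 := by
          rw [sub_div]; linarith
        exact (div_lt_one hδ0).mp k1
      · have k1 : ((inner ℝ a (t a) : ℝ) - (inner ℝ b (t b) : ℝ))/δ < 1 := by
          rw [sub_div]; linarith
        exact (div_lt_one hδ0).mp k1
    have hinner : (inner ℝ (b - a) (t a) : ℝ) = (inner ℝ b (t b) : ℝ) - (inner ℝ a (t a) : ℝ) := by
      rw [inner_sub_left]
      rw [e1]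
    have hclose : ‖b - a‖ < P⁻¹ := by
      rw [hinner] at key
      have habs := key.trans_lt hfd
      rw [hδdef] at habs
      nlinarith [norm_nonneg (b - a)]
    have hcoordfl : ∀ i : Fin 2, ⌊a i * P⌋ ≤ ⌊b i * P⌋ + 1 ∧ ⌊b i * P⌋ ≤ ⌊a i * P⌋ + 1 := by
      intro i
      have hc : |b i - a i| ≤ ‖b - a‖ := by
        have := KTaux.coord_abs_le_norm (b - a) i
        rwa [show (b - a) i = b i - a i from rfl] at this
      have hc2 : |b i * P - a i * P| < 1 := by
        rw [show b i * P - a i * P = (b i - a i) * P by ring, abs_mul, abs_of_pos hP0]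
        calc |b i - a i| * P ≤ ‖b - a‖ * P := by
              exact mul_le_mul_of_nonneg_right hc hP0.le
          _ < P⁻¹ * P := by exact mul_lt_mul_of_pos_right hclose hP0
          _ = 1 := inv_mul_cancel₀ hP0.ne'
      rw [abs_lt] at hc2
      constructor
      · have hlt : (⌊a i * P⌋ : ℝ) < (⌊b i * P⌋ : ℝ) + 2 := by
          have f1 := Int.floor_le (a i * P)
          have f2 := Int.lt_floor_add_one (b i * P)
          linarith
        have : ⌊a i * P⌋ < ⌊b i * P⌋ + 2 := by exact_mod_cast hlt
        omega
      · have hlt : (⌊b i * P⌋ : ℝ) < (⌊a i * P⌋ : ℝ) + 2 := by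
          have f1 := Int.floor_le (b i * P)
          have f2 := Int.lt_floor_add_one (a i * P)
          linarith
        have : ⌊b i * P⌋ < ⌊a i * P⌋ + 2 := by exact_mod_cast hlt
        omega
    have hfeq0 : ⌊a 0 * P⌋ = ⌊b 0 * P⌋ := by
      obtain ⟨c1, c2⟩ := hcoordfl 0
      have e3' : (⌊a 0 * P⌋ % 2 = 0) ↔ (⌊b 0 * P⌋ % 2 = 0) := by
        constructor <;> intro h
        · exact of_decide_eq_true (e3 ▸ decide_eq_true h)
        · exact of_decide_eq_true (e3.symm ▸ decide_eq_true h)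
      omega
    have hfeq1 : ⌊a 1 * P⌋ = ⌊b 1 * P⌋ := by
      obtain ⟨c1, c2⟩ := hcoordfl 1
      have e4' : (⌊a 1 * P⌋ % 2 = 0) ↔ (⌊b 1 * P⌋ % 2 = 0) := by
        constructor <;> intro h
        · exact of_decide_eq_true (e4 ▸ decide_eq_true h)
        · exact of_decide_eq_true (e4.symm ▸ decide_eq_true h)
      omega
    have hfeq : ∀ i : Fin 2, ⌊a i * P⌋ = ⌊b i * P⌋ := by
      intro i
      fin_cases i
      · exact hfeq0
      · exact hfeq1
    have h2k : ((2:ℝ))^(-(k:ℤ)) = P⁻¹ := by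
      rw [hP, zpow_neg, zpow_natCast]
    have hmema : a ∈ dcube 2 k (fun i => ⌊a i * P⌋) := by
      intro i
      rw [h2k]
      constructor
      · have := mul_le_mul_of_nonneg_right (Int.floor_le (a i * P)) (inv_nonneg.mpr hP0.le)
        rwa [mul_assoc, mul_inv_cancel₀ hP0.ne', mul_one] at this
      · have := mul_lt_mul_of_pos_right (Int.lt_floor_add_one (a i * P)) (inv_pos.mpr hP0)
        rwa [mul_assoc, mul_inv_cancel₀ hP0.ne', mul_one] at this
    have hmemb : b ∈ dcube 2 k (fun i => ⌊a i * P⌋) := by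
      intro i
      rw [h2k]
      constructor
      · have h := mul_le_mul_of_nonneg_right (Int.floor_le (b i * P)) (inv_nonneg.mpr hP0.le)
        rw [mul_assoc, mul_inv_cancel₀ hP0.ne', mul_one, ← hfeq i] at h
        exact h
      · have h := mul_lt_mul_of_pos_right (Int.lt_floor_add_one (b i * P)) (inv_pos.mpr hP0)
        rw [mul_assoc, mul_inv_cancel₀ hP0.ne', mul_one, ← hfeq i] at h
        exact h
    exact hne (hdisc (fun i => ⌊a i * P⌋) ⟨ha, hmema⟩ ⟨hb, hmemb⟩)
  -- counting
  have hbnd : ∀ a ∈ A, ⌊(inner ℝ a (t a) : ℝ) / δ⌋ ∈ Finset.Icc (-M) M := by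
    intro a ha
    have hna : ‖a‖ ≤ 2 := by
      have h0 := (hA ha) 0
      have h1 := (hA ha) 1
      nlinarith [KTaux.norm_sq_expand a, norm_nonneg a]
    have hnt : ‖t a‖ ≤ 2 := by
      have := abs_norm_sub_norm_le (KTaux.perp (v a)) (t a)
      have h2 := (ht2 a ha)
      have h3 : ‖KTaux.perp (v a)‖ = 1 := by rw [KTaux.norm_perp, hv1 a ha]
      rw [abs_le] at this
      linarith [this.1]
    have hia : |(inner ℝ a (t a) : ℝ)| ≤ 4 := by
      have := abs_real_inner_le_norm a (t a)
      nlinarith [norm_nonneg a, norm_nonneg (t a)]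
    rw [abs_le] at hia
    rw [Finset.mem_Icc]
    constructor
    · rw [Int.le_floor]
      push_cast
      rw [neg_le, ← neg_div]
      calc -(inner ℝ a (t a) : ℝ) / δ ≤ 4 / δ := by gcongr; linarith
        _ ≤ (M : ℝ) := Int.le_ceil _
    · have : (⌊(inner ℝ a (t a) : ℝ) / δ⌋ : ℝ) ≤ (M : ℝ) := by
        calc (⌊(inner ℝ a (t a) : ℝ) / δ⌋ : ℝ) ≤ (inner ℝ a (t a) : ℝ) / δ := Int.floor_le _
          _ ≤ 4 / δ := by gcongr; linarith
          _ ≤ (M : ℝ) := Int.le_ceil _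
      exact_mod_cast this
  have himg : Φ '' A ⊆ ↑(T ×ˢ (Finset.Icc (-M) M) ×ˢ ((Finset.univ : Finset Bool) ×ˢ (Finset.univ : Finset Bool))) := by
    rintro - ⟨a, ha, rfl⟩
    rw [Finset.mem_coe, Finset.mem_product, Finset.mem_product, Finset.mem_product]
    exact ⟨ht1 a ha, hbnd a ha, Finset.mem_univ _, Finset.mem_univ _⟩
  have hcount : (Nat.card ↥A : ℝ) ≤ (T.card : ℝ) * ((2 * (M:ℝ) + 1) * 4) := by
    have hc1 : Nat.card ↥A = A.ncard := (Nat.card_coe_set_eq A).symm ▸ rfl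
    have hc2 : A.ncard = (Φ '' A).ncard := (Set.ncard_image_of_injOn hinj).symm
    have hc3 : (Φ '' A).ncard ≤ (T ×ˢ (Finset.Icc (-M) M) ×ˢ ((Finset.univ : Finset Bool) ×ˢ (Finset.univ : Finset Bool))).card := by
      have := Set.ncard_le_ncard himg (Finset.finite_toSet _)
      rwa [Set.ncard_coe_finset] at this
    have hc4 : (T ×ˢ (Finset.Icc (-M) M) ×ˢ ((Finset.univ : Finset Bool) ×ˢ (Finset.univ : Finset Bool))).card
        = T.card * ((Finset.Icc (-M) M).card * 4) := by
      rw [Finset.card_product, Finset.card_product, Finset.card_product]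
      simp [Finset.card_univ]
    have hc5 : ((Finset.Icc (-M) M).card : ℝ) = 2 * (M:ℝ) + 1 := by
      rw [Int.card_Icc]
      rw [show M + 1 - -M = 2*M + 1 by ring]
      have hnn : (0:ℤ) ≤ 2*M+1 := by linarith
      rw [← Int.cast_natCast (R := ℝ), Int.toNat_of_nonneg hnn]
      push_cast
      ring
    have : (Nat.card ↥A : ℝ) ≤ ((T.card * ((Finset.Icc (-M) M).card * 4) : ℕ) : ℝ) := by
      exact_mod_cast (hc1 ▸ hc2 ▸ hc3).trans_eq hc4
    push_cast at this
    rw [hc5] at this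
    linarith
  have hMb : (M : ℝ) ≤ 8 * (P / s) + 1 := by
    have h1 : (M : ℝ) < 4 / δ + 1 := Int.ceil_lt_add_one _
    have h2 : 4 / δ = 8 * (P / s) := by
      rw [hδdef]
      field_simp
      ring
    linarith
  have hTc : (0:ℝ) ≤ (T.card : ℝ) := Nat.cast_nonneg _
  calc (Nat.card ↥A : ℝ) ≤ (T.card : ℝ) * ((2 * (M:ℝ) + 1) * 4) := hcount
    _ ≤ ((T.card : ℝ) + 1) * 4 * (16 / s + 3) * P := by
        have hX0 : (0:ℝ) ≤ (16 / s + 3) * P := by positivity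
        have key : (2 * (M:ℝ) + 1) ≤ (16 / s + 3) * P := by
          have e : (16 / s + 3) * P = 16 * (P / s) + 3 * P := by ring
          rw [e]
          linarith
        have hm := mul_le_mul_of_nonneg_left key hTc
        nlinarith [hm, hX0]
end

section
/- Given s ∈ (1,2), C > 1, κ ∈ (0, (s−1)/(2s)) and β ∈ (0, π/2), the following holds for all sufficiently large N (depending only on s, C, κ, β): if A is a discrete (s,C)-Ahlfors regular set at scale 2^{-N} contained in [0,1]² and B ⊂ A satisfies #B > 2^{(1−κ)sN}, then there exists a subset E ⊂ B with #E ≤ 2^{(1−κ)sN} such that for all x ∈ B ∖ E and every v ∈ S¹ there exists y ∈ B with y ∈ X(x,β,v) and |x − y| ≥ 2^{−2s(s−1)^{−1}κN}. -/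
open MeasureTheory Metric Set Filter
open scoped ENNReal NNReal Topology

open scoped RealInnerProductSpace

noncomputable section AuxConicalDensity

private lemma aux_arccos_lt {t b : ℝ} (ht1 : -1 ≤ t) (ht2 : t ≤ 1) (hb0 : 0 ≤ b)
    (hbπ : b ≤ Real.pi) : Real.arccos t < b ↔ Real.cos b < t := by
  constructor
  · intro h
    have := Real.cos_lt_cos_of_nonneg_of_le_pi (Real.arccos_nonneg t) hbπ h
    rwa [Real.cos_arccos ht1 ht2] at this
  · intro h
    by_contra h'
    push_neg at h'
    have := Real.cos_le_cos_of_nonneg_of_le_pi hb0 (Real.arccos_le_pi t) h'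
    rw [Real.cos_arccos ht1 ht2] at this
    linarith

private lemma aux_inner (u v : Plane) : ⟪u, v⟫ = u 0 * v 0 + u 1 * v 1 := by
  simp [PiLp.inner_apply, RCLike.inner_apply, Fin.sum_univ_two]
  ring

private lemma aux_normsq (u : Plane) : ‖u‖ ^ 2 = u 0 ^ 2 + u 1 ^ 2 := by
  rw [← real_inner_self_eq_norm_sq, aux_inner]; ring

private lemma mem_cone_iff {b : ℝ} (hb0 : 0 < b) (hbπ : b ≤ Real.pi) {v : Plane}
    (hv : ‖v‖ = 1) (x y : Plane) :
    y ∈ cone x b v ↔ y ≠ x ∧ ‖y - x‖ * Real.cos b < |⟪y - x, v⟫| := by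
  unfold cone
  simp only [Set.mem_setOf_eq]
  refine and_congr_right fun hne => ?_
  have hu : (0:ℝ) < ‖y - x‖ := by rw [norm_pos_iff]; exact sub_ne_zero.mpr hne
  have hcs : |⟪y - x, v⟫ / ‖y - x‖| ≤ 1 := by
    have h := abs_real_inner_div_norm_mul_norm_le_one (y - x) v
    rwa [hv, mul_one] at h
  rw [abs_le] at hcs
  have h1 : InnerProductGeometry.angle (y - x) v
      = Real.arccos (⟪y - x, v⟫ / ‖y - x‖) := by
    rw [InnerProductGeometry.angle, hv, mul_one]
  have h2 : InnerProductGeometry.angle (y - x) (-v)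
      = Real.arccos (-(⟪y - x, v⟫ / ‖y - x‖)) := by
    rw [InnerProductGeometry.angle, norm_neg, hv, mul_one, inner_neg_right, neg_div]
  rw [h1, h2, aux_arccos_lt hcs.1 hcs.2 hb0.le hbπ,
    aux_arccos_lt (by linarith) (by linarith) hb0.le hbπ, ← lt_abs, abs_div,
    abs_of_pos hu, lt_div_iff₀ hu]
  constructor <;> intro h <;> linarith

private def uvec (θ : ℝ) : Plane :=
  (EuclideanSpace.equiv (Fin 2) ℝ).symm ![Real.cos θ, Real.sin θ]

private def wvec (θ : ℝ) : Plane :=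
  (EuclideanSpace.equiv (Fin 2) ℝ).symm ![-Real.sin θ, Real.cos θ]

private lemma uvec_apply (θ : ℝ) : uvec θ 0 = Real.cos θ ∧ uvec θ 1 = Real.sin θ :=
  ⟨rfl, rfl⟩

private lemma wvec_apply (θ : ℝ) : wvec θ 0 = -Real.sin θ ∧ wvec θ 1 = Real.cos θ :=
  ⟨rfl, rfl⟩

private lemma uvec_norm (θ : ℝ) : ‖uvec θ‖ = 1 := by
  have h := aux_normsq (uvec θ)
  rw [(uvec_apply θ).1, (uvec_apply θ).2] at h
  nlinarith [norm_nonneg (uvec θ), Real.sin_sq_add_cos_sq θ]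

private lemma wvec_norm (θ : ℝ) : ‖wvec θ‖ = 1 := by
  have h := aux_normsq (wvec θ)
  rw [(wvec_apply θ).1, (wvec_apply θ).2] at h
  nlinarith [norm_nonneg (wvec θ), Real.sin_sq_add_cos_sq θ]

private lemma aux_pyth (θ : ℝ) (u : Plane) :
    ⟪u, uvec θ⟫ ^ 2 + ⟪u, wvec θ⟫ ^ 2 = ‖u‖ ^ 2 := by
  simp only [aux_inner, aux_normsq, (uvec_apply θ).1, (uvec_apply θ).2,
    (wvec_apply θ).1, (wvec_apply θ).2]
  nlinarith [Real.sin_sq_add_cos_sq θ]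

private lemma aux_dot (θ : ℝ) (u v : Plane) :
    ⟪u, v⟫ = ⟪u, uvec θ⟫ * ⟪v, uvec θ⟫ + ⟪u, wvec θ⟫ * ⟪v, wvec θ⟫ := by
  simp only [aux_inner, (uvec_apply θ).1, (uvec_apply θ).2,
    (wvec_apply θ).1, (wvec_apply θ).2]
  linear_combination -(u 0 * v 0 + u 1 * v 1) * (Real.sin_sq_add_cos_sq θ)

private lemma aux_key {θ : ℝ} {u v : Plane} (hv : ‖v‖ = 1) {c' s' : ℝ}
    (hc : 0 < c') (hs : 0 < s') (hcs : c' ^ 2 + s' ^ 2 = 1)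
    (hvm : c' ≤ |⟪v, uvec θ⟫|) (hum : ‖u‖ * c' < |⟪u, uvec θ⟫|) :
    ‖u‖ * (c' ^ 2 - s' ^ 2) < |⟪u, v⟫| := by
  set a := ⟪u, uvec θ⟫ with ha
  set bb := ⟪u, wvec θ⟫ with hbb
  set p := ⟪v, uvec θ⟫ with hp
  set q := ⟪v, wvec θ⟫ with hq
  have h1 : a ^ 2 + bb ^ 2 = ‖u‖ ^ 2 := aux_pyth θ u
  have h2 : p ^ 2 + q ^ 2 = 1 := by have := aux_pyth θ v; rwa [hv, one_pow] at this
  have h3 : ⟪u, v⟫ = a * p + bb * q := aux_dot θ u v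
  have hu0 : (0:ℝ) ≤ ‖u‖ := norm_nonneg u
  have ha2 : (‖u‖ * c') ^ 2 < a ^ 2 := by
    have := sq_abs a
    nlinarith [mul_nonneg hu0 hc.le]
  have hbb2 : bb ^ 2 ≤ (‖u‖ * s') ^ 2 := by nlinarith
  have hbbA : |bb| ≤ ‖u‖ * s' := by
    have := Real.sqrt_le_sqrt hbb2
    rwa [Real.sqrt_sq_eq_abs, Real.sqrt_sq (by positivity)] at this
  have hq2 : q ^ 2 ≤ s' ^ 2 := by nlinarith [sq_abs p, abs_nonneg p]
  have hqA : |q| ≤ s' := by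
    have := Real.sqrt_le_sqrt hq2
    rwa [Real.sqrt_sq_eq_abs, Real.sqrt_sq hs.le] at this
  have habs : |a * p| - |bb * q| ≤ |a * p + bb * q| := by
    have h := abs_sub_abs_le_abs_sub (a * p) (-(bb * q))
    rw [abs_neg, sub_neg_eq_add] at h
    exact h
  have hap : (‖u‖ * c') * c' < |a| * |p| := by
    calc (‖u‖ * c') * c' ≤ (‖u‖ * c') * |p| := by
          apply mul_le_mul_of_nonneg_left hvm (by positivity)
      _ < |a| * |p| := by
          apply mul_lt_mul_of_pos_right hum (lt_of_lt_of_le hc hvm)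
  have hbq : |bb| * |q| ≤ (‖u‖ * s') * s' :=
    mul_le_mul hbbA hqA (abs_nonneg q) (by positivity)
  rw [h3]
  rw [abs_mul] at habs
  rw [abs_mul] at habs
  nlinarith

private lemma aux_net_core {γ ψ : ℝ} (hγ0 : 0 < γ) (hγπ : γ ≤ Real.pi)
    (hψ0 : 0 ≤ ψ) (hψπ : ψ ≤ Real.pi) :
    ∃ j : ℕ, j ≤ ⌊Real.pi / γ⌋₊ ∧ Real.cos γ ≤ |Real.cos (ψ - (j : ℝ) * γ)| := by
  refine ⟨⌊ψ / γ⌋₊, Nat.floor_le_floor (by gcongr), ?_⟩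
  have hψγ0 : 0 ≤ ψ / γ := by positivity
  have h1 : (⌊ψ / γ⌋₊ : ℝ) * γ ≤ ψ := (le_div_iff₀ hγ0).mp (Nat.floor_le hψγ0)
  have h2 : ψ < (⌊ψ / γ⌋₊ : ℝ) * γ + γ := by
    have h := (div_lt_iff₀ hγ0).mp (Nat.lt_floor_add_one (ψ / γ))
    nlinarith
  calc Real.cos γ ≤ Real.cos (ψ - (⌊ψ / γ⌋₊ : ℝ) * γ) :=
        Real.cos_le_cos_of_nonneg_of_le_pi (by linarith) hγπ (by linarith)
    _ ≤ |Real.cos (ψ - (⌊ψ / γ⌋₊ : ℝ) * γ)| := le_abs_self _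

private lemma aux_net {v : Plane} (hv : ‖v‖ = 1) {γ : ℝ} (hγ0 : 0 < γ)
    (hγπ : γ ≤ Real.pi) :
    ∃ j : ℕ, j ≤ ⌊Real.pi / γ⌋₊ ∧ Real.cos γ ≤ |⟪v, uvec ((j : ℝ) * γ)⟫| := by
  have hv2 : v 0 ^ 2 + v 1 ^ 2 = 1 := by rw [← aux_normsq, hv]; norm_num
  set z : ℂ := ⟨v 0, v 1⟩ with hz
  have habs : ‖z‖ = 1 := by
    rw [Complex.norm_def, Complex.normSq_mk]
    rw [show v 0 * v 0 + v 1 * v 1 = 1 by nlinarith]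
    exact Real.sqrt_one
  have hz0 : z ≠ 0 := by
    intro h; rw [h] at habs; simp at habs
  have hcos : Real.cos z.arg = v 0 := by rw [Complex.cos_arg hz0, habs]; simp [hz]
  have hsin : Real.sin z.arg = v 1 := by rw [Complex.sin_arg, habs]; simp [hz]
  have hφ1 : -Real.pi < z.arg := Complex.neg_pi_lt_arg z
  have hφ2 : z.arg ≤ Real.pi := Complex.arg_le_pi z
  have h4 : ∀ θ : ℝ, ⟪v, uvec θ⟫ = Real.cos (z.arg - θ) := by
    intro θ
    rw [aux_inner, (uvec_apply θ).1, (uvec_apply θ).2, Real.cos_sub, ← hcos, ← hsin]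
  by_cases hφ0 : 0 ≤ z.arg
  · obtain ⟨j, hj, hcosj⟩ := aux_net_core hγ0 hγπ hφ0 hφ2
    refine ⟨j, hj, ?_⟩
    rw [← h4 ((j : ℝ) * γ)] at hcosj
    exact hcosj
  · push_neg at hφ0
    obtain ⟨j, hj, hcosj⟩ := aux_net_core hγ0 hγπ
      (by linarith : (0:ℝ) ≤ z.arg + Real.pi) (by linarith)
    refine ⟨j, hj, ?_⟩
    rw [show z.arg + Real.pi - (j:ℝ) * γ = (z.arg - (j:ℝ) * γ) + Real.pi by ring,
      Real.cos_add_pi, abs_neg, ← h4 ((j : ℝ) * γ)] at hcosj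
    exact hcosj

private lemma aux_case2 {nu c2 s2 im iw : ℝ} (hcs : c2 ^ 2 + s2 ^ 2 = 1)
    (hpyth : im ^ 2 + iw ^ 2 = nu ^ 2) (hcase : |im| ≤ nu * c2) (hnu : 0 ≤ nu)
    (hs : 0 ≤ s2) : nu * s2 ≤ |iw| := by
  have hsq : im ^ 2 ≤ (nu * c2) ^ 2 := by
    have h := pow_le_pow_left₀ (abs_nonneg im) hcase 2
    rwa [sq_abs] at h
  have h1 : (nu * s2) ^ 2 ≤ iw ^ 2 := by nlinarith [sq_nonneg nu]
  have h := Real.sqrt_le_sqrt h1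
  rwa [Real.sqrt_sq (by positivity), Real.sqrt_sq_eq_abs] at h

private lemma aux_norm_le_two {x : Plane} (h0 : 0 ≤ x 0) (h0' : x 0 ≤ 1)
    (h1 : 0 ≤ x 1) (h1' : x 1 ≤ 1) : ‖x‖ ≤ 2 := by
  have h := aux_normsq x
  nlinarith [norm_nonneg x]

end AuxConicalDensity

set_option maxHeartbeats 2000000 in
/-- **Lemma 4.2.** Conical density for large subsets of discrete Ahlfors-regular sets. -/
theorem dense_radial_projections_discrete_AR :
    ∀ s C κ β : ℝ, s ∈ Set.Ioo (1 : ℝ) 2 → 1 < C → κ ∈ Set.Ioo 0 ((s - 1) / (2 * s)) →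
    β ∈ Set.Ioo 0 (Real.pi / 2) →
    ∃ N₀ : ℕ, ∀ N : ℕ, N₀ ≤ N →
    ∀ A : Set Plane, A ⊆ unitSquare → DiscreteAhlfors 2 A s C N →
    ∀ B : Set Plane, B ⊆ A → (2 : ℝ) ^ ((1 - κ) * s * N) < (Nat.card ↥B : ℝ) →
    ∃ E : Set Plane, E ⊆ B ∧ (Nat.card ↥E : ℝ) ≤ (2 : ℝ) ^ ((1 - κ) * s * N) ∧
      ∀ x ∈ B \ E, ∀ v : Plane, ‖v‖ = 1 →
        ∃ y ∈ B, y ∈ cone x β v ∧ (2 : ℝ) ^ (-(2 * s / (s - 1)) * κ * N) ≤ dist x y := by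
  intro s C κ β hs hC hκ hβ
  obtain ⟨hs1, hs2⟩ := hs
  obtain ⟨hκ0, hκu⟩ := hκ
  obtain ⟨hβ0, hβu⟩ := hβ
  have hπ := Real.pi_pos
  have hs10 : (0:ℝ) < s - 1 := by linarith
  have hs0 : (0:ℝ) < s := by linarith
  have hC0 : (0:ℝ) < C := by linarith
  set γ : ℝ := β / 2 with hγdef
  have hγ0 : 0 < γ := by rw [hγdef]; linarith
  have hγπ2 : γ < Real.pi / 2 := by rw [hγdef]; linarith
  set c' : ℝ := Real.cos γ with hc'def
  set s' : ℝ := Real.sin γ with hs'def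
  have hc'0 : 0 < c' := Real.cos_pos_of_mem_Ioo ⟨by linarith, hγπ2⟩
  have hs'0 : 0 < s' := Real.sin_pos_of_pos_of_lt_pi hγ0 (by linarith)
  have hs'1 : s' ≤ 1 := Real.sin_le_one γ
  have hcs : c' ^ 2 + s' ^ 2 = 1 := by
    have h := Real.sin_sq_add_cos_sq γ; rw [hc'def, hs'def]; linarith
  have hcosβ : c' ^ 2 - s' ^ 2 = Real.cos β := by
    have h2γ : β = 2 * γ := by rw [hγdef]; ring
    rw [h2γ, Real.cos_two_mul]; linarith
  set τ : ℝ := 2 * s / (s - 1) * κ with hτdef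
  have hτ0 : 0 < τ := mul_pos (div_pos (by linarith) hs10) hκ0
  have hτs : τ * (s - 1) = 2 * s * κ := by rw [hτdef]; field_simp
  have hτ1 : τ < 1 := by
    have h2 : κ * (2 * s) < s - 1 := (lt_div_iff₀ (by linarith : (0:ℝ) < 2*s)).mp hκu
    nlinarith
  obtain ⟨J, hJ⟩ : ∃ J : ℕ, 2 / s' < (2:ℝ) ^ J := pow_unbounded_of_one_lt _ one_lt_two
  set K : ℕ := ⌊Real.pi / γ⌋₊ + 1 with hKdef
  set D : ℝ := C * (2:ℝ) ^ ((J:ℝ) * s) * ((Real.pi / γ + 1) * 7) with hDdef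
  have hev1 : ∀ᶠ n : ℕ in Filter.atTop, (J:ℝ) + 1 ≤ τ * (n:ℝ) :=
    (tendsto_natCast_atTop_atTop.const_mul_atTop hτ0).eventually_ge_atTop _
  have hev2 : ∀ᶠ n : ℕ in Filter.atTop, (2:ℝ) ≤ (1 - τ) * (n:ℝ) :=
    (tendsto_natCast_atTop_atTop.const_mul_atTop (by linarith)).eventually_ge_atTop _
  have hev3 : ∀ᶠ n : ℕ in Filter.atTop, D ≤ (2:ℝ) ^ (κ * s * (n:ℝ)) := by
    have h1 : Filter.Tendsto (fun n : ℕ => κ * s * (n:ℝ)) Filter.atTop Filter.atTop :=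
      tendsto_natCast_atTop_atTop.const_mul_atTop (by positivity)
    have h2 : Filter.Tendsto (fun x : ℝ => (2:ℝ) ^ x) Filter.atTop Filter.atTop := by
      have he : (fun x : ℝ => (2:ℝ) ^ x) = fun x => Real.exp (Real.log 2 * x) := by
        funext x; rw [Real.rpow_def_of_pos two_pos]
      rw [he]
      exact Real.tendsto_exp_atTop.comp
        (Filter.tendsto_id.const_mul_atTop (Real.log_pos one_lt_two))
    exact (h2.comp h1).eventually_ge_atTop D
  obtain ⟨N₀, hN₀⟩ := Filter.eventually_atTop.mp ((hev1.and hev2).and hev3)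
  refine ⟨N₀, fun N hN A hAsq hAR B hBA _hBcard => ?_⟩
  obtain ⟨⟨hc1, hc2⟩, hc3⟩ := hN₀ N hN
  classical
  set r : ℝ := (2:ℝ) ^ (-(2 * s / (s - 1)) * κ * (N:ℝ)) with hrdef
  have hrτ : r = (2:ℝ) ^ (-(τ * (N:ℝ))) := by rw [hrdef]; congr 1; rw [hτdef]; ring
  have hr0 : 0 < r := by rw [hrτ]; positivity
  have hr1 : r ≤ 1 := by
    rw [hrτ]
    apply Real.rpow_le_one_of_one_le_of_nonpos one_le_two
    have : (0:ℝ) ≤ τ * (N:ℝ) := by positivity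
    linarith
  set k : ℕ := ⌈τ * (N:ℝ)⌉₊ - J with hkdef
  have hceil_ge : τ * (N:ℝ) ≤ (⌈τ * (N:ℝ)⌉₊ : ℝ) := Nat.le_ceil _
  have hceil_lt : (⌈τ * (N:ℝ)⌉₊ : ℝ) < τ * (N:ℝ) + 1 := Nat.ceil_lt_add_one (by positivity)
  have hJle : J ≤ ⌈τ * (N:ℝ)⌉₊ := by
    have h : ((J:ℕ):ℝ) ≤ (⌈τ * (N:ℝ)⌉₊ : ℝ) := by push_cast; linarith
    exact_mod_cast h
  have hkcast : (k:ℝ) = (⌈τ * (N:ℝ)⌉₊ : ℝ) - (J:ℝ) := by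
    rw [hkdef, Nat.cast_sub hJle]
  have hkN : k < N := by
    have h : (k:ℝ) < (N:ℝ) := by
      rw [hkcast]
      have : (0:ℝ) ≤ (J:ℝ) := Nat.cast_nonneg J
      linarith
    exact_mod_cast h
  have h2k : ((2:ℝ) ^ (-(k:ℤ)) : ℝ) = (2:ℝ) ^ (-(k:ℝ)) := by
    rw [← Real.rpow_intCast 2 (-(k:ℤ))]; push_cast; ring_nf
  have hkr : r / s' ≤ (2:ℝ) ^ (-(k:ℤ)) := by
    rw [h2k]
    have e1 : -(k:ℝ) = (J:ℝ) + -(⌈τ * (N:ℝ)⌉₊:ℝ) := by rw [hkcast]; ring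
    have e2 : (2:ℝ) ^ (-(k:ℝ)) = 2 ^ ((J:ℝ)) * 2 ^ (-(⌈τ * (N:ℝ)⌉₊:ℝ)) := by
      rw [e1, Real.rpow_add two_pos]
    have e3 : (2:ℝ) ^ (-(τ * (N:ℝ)) - 1) ≤ 2 ^ (-(⌈τ * (N:ℝ)⌉₊:ℝ)) :=
      Real.rpow_le_rpow_of_exponent_le one_le_two (by linarith)
    have e4 : (2:ℝ) ^ (-(τ * (N:ℝ)) - 1) = r / 2 := by
      rw [hrτ, Real.rpow_sub two_pos, Real.rpow_one]
    have e5 : (2:ℝ) ^ ((J:ℕ):ℝ) = (2:ℝ) ^ (J:ℕ) := Real.rpow_natCast 2 J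
    rw [e2, e5]
    calc r / s' = (2 / s') * (r / 2) := by field_simp
      _ ≤ (2:ℝ) ^ (J:ℕ) * (r / 2) := by
          apply mul_le_mul_of_nonneg_right hJ.le (by positivity)
      _ ≤ (2:ℝ) ^ (J:ℕ) * (2:ℝ) ^ (-(⌈τ * (N:ℝ)⌉₊:ℝ)) := by
          apply mul_le_mul_of_nonneg_left _ (by positivity)
          rw [← e4]; exact e3
  set P : Plane → Prop :=
    fun x => ∃ v : Plane, ‖v‖ = 1 ∧ ∀ y ∈ B, y ∈ cone x β v → dist x y < r with hPdef
  refine ⟨{x ∈ B | P x}, fun x hx => hx.1, ?_, ?_⟩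
  swap
  · rintro x hx v hv
    obtain ⟨hxB, hxE⟩ := hx
    have hnp : ¬ P x := fun h => hxE ⟨hxB, h⟩
    simp only [hPdef] at hnp
    push_neg at hnp
    obtain ⟨y, hyB, hyc, hyd⟩ := hnp v hv
    exact ⟨y, hyB, hyc, hyd⟩
  · -- cardinality bound
    have hAfin : A.Finite := hAR.1
    have hEfin : ({x ∈ B | P x} : Set Plane).Finite :=
      hAfin.subset (fun x hx => hBA hx.1)
    have hmemB : ∀ x ∈ hEfin.toFinset, x ∈ B :=
      fun x hx => ((Set.Finite.mem_toFinset hEfin).mp hx).1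
    have hchoice : ∀ x ∈ hEfin.toFinset, ∃ (v : Plane) (j : ℕ), ‖v‖ = 1 ∧
        (∀ y ∈ B, y ∈ cone x β v → dist x y < r) ∧ j ≤ ⌊Real.pi / γ⌋₊ ∧
        c' ≤ |⟪v, uvec ((j:ℝ) * γ)⟫| := by
      intro x hx
      rw [Set.Finite.mem_toFinset] at hx
      obtain ⟨v, hv, hvp⟩ := hx.2
      obtain ⟨j, hj, hjv⟩ := aux_net hv hγ0 (by linarith)
      exact ⟨v, j, hv, hvp, hj, hjv⟩
    choose! vfn jfn hvfn hconefn hjfn hnetfn using hchoice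
    set f : Plane → ℕ × ℤ :=
      fun x => (jfn x, ⌊⟪x, wvec ((jfn x : ℝ) * γ)⟫ / r⌋) with hfdef
    have pair : ∀ x ∈ hEfin.toFinset, ∀ y ∈ hEfin.toFinset, f x = f y →
        dist x y ≤ r / s' := by
      intro x hx y hy hfe
      rcases eq_or_ne y x with rfl | hne
      · rw [dist_self]; positivity
      have hjeq : jfn x = jfn y := congrArg Prod.fst hfe
      have hfl : ⌊⟪x, wvec ((jfn x : ℝ) * γ)⟫ / r⌋ = ⌊⟪y, wvec ((jfn x : ℝ) * γ)⟫ / r⌋ := by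
        have h := congrArg Prod.snd hfe
        simp only [hfdef] at h
        rw [← hjeq] at h
        exact h
      have hdist : dist x y = ‖y - x‖ := by rw [dist_eq_norm, norm_sub_rev]
      by_cases hcase : ‖y - x‖ * c' < |⟪y - x, uvec ((jfn x : ℝ) * γ)⟫|
      · have hkey := aux_key (hvfn x hx) hc'0 hs'0 hcs (hnetfn x hx) hcase
        rw [hcosβ] at hkey
        have hyc : y ∈ cone x β (vfn x) :=
          (mem_cone_iff hβ0 (by linarith) (hvfn x hx) x y).mpr ⟨hne, hkey⟩
        have hlt := hconefn x hx y (hmemB y hy) hyc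
        rw [le_div_iff₀ hs'0]
        calc dist x y * s' ≤ dist x y * 1 :=
              mul_le_mul_of_nonneg_left hs'1 dist_nonneg
          _ = dist x y := mul_one _
          _ ≤ r := hlt.le
      · push_neg at hcase
        have hpyth := aux_pyth ((jfn x : ℝ) * γ) (y - x)
        have h2 : ‖y - x‖ * s' ≤ |⟪y - x, wvec ((jfn x : ℝ) * γ)⟫| :=
          aux_case2 hcs hpyth hcase (norm_nonneg _) hs'0.le
        have hiw : ⟪y - x, wvec ((jfn x : ℝ) * γ)⟫
            = ⟪y, wvec ((jfn x : ℝ) * γ)⟫ - ⟪x, wvec ((jfn x : ℝ) * γ)⟫ :=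
          inner_sub_left _ _ _
        have h3 : |⟪y - x, wvec ((jfn x : ℝ) * γ)⟫| < r := by
          have hfx := Int.floor_le (⟪x, wvec ((jfn x : ℝ) * γ)⟫ / r)
          have hgx := Int.lt_floor_add_one (⟪x, wvec ((jfn x : ℝ) * γ)⟫ / r)
          have hfy := Int.floor_le (⟪y, wvec ((jfn x : ℝ) * γ)⟫ / r)
          have hgy := Int.lt_floor_add_one (⟪y, wvec ((jfn x : ℝ) * γ)⟫ / r)
          rw [hfl] at hfx hgx
          have hd : |(⟪y, wvec ((jfn x : ℝ) * γ)⟫ - ⟪x, wvec ((jfn x : ℝ) * γ)⟫) / r| < 1 := by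
            rw [sub_div, abs_sub_lt_iff]
            constructor <;> linarith
          rw [abs_div, abs_of_pos hr0, div_lt_one hr0] at hd
          rw [hiw]
          exact hd
        rw [hdist, le_div_iff₀ hs'0]
        calc ‖y - x‖ * s' ≤ |⟪y - x, wvec ((jfn x : ℝ) * γ)⟫| := h2
          _ ≤ r := h3.le
    set m : ℕ := ⌊C * (2:ℝ) ^ (((N:ℝ) - (k:ℝ)) * s)⌋₊ with hmdef
    set c2 : ℤ := ⌈(2:ℝ) / r⌉ with hc2def
    have hc2nn : (0:ℝ) ≤ (c2:ℝ) := le_trans (by positivity) (Int.le_ceil _)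
    have himg : hEfin.toFinset.image f ⊆ Finset.range K ×ˢ Finset.Icc (-c2) c2 := by
      intro p hp
      obtain ⟨x, hx, hfx⟩ := Finset.mem_image.mp hp
      rw [← hfx, Finset.mem_product]
      constructor
      · exact Finset.mem_range.mpr (Nat.lt_succ_of_le (hjfn x hx))
      · rw [Finset.mem_Icc]
        have hxu := hAsq (hBA (hmemB x hx))
        have hx0 := hxu 0
        have hx1 := hxu 1
        have hn2 : ‖x‖ ≤ 2 := aux_norm_le_two hx0.1 hx0.2 hx1.1 hx1.2
        have hw := abs_real_inner_le_norm x (wvec ((jfn x : ℝ) * γ))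
        rw [wvec_norm, mul_one] at hw
        have hw2 : |⟪x, wvec ((jfn x : ℝ) * γ)⟫| ≤ 2 := le_trans hw hn2
        rw [abs_le] at hw2
        have hcu : (2:ℝ) / r ≤ (c2:ℝ) := Int.le_ceil _
        constructor
        · rw [Int.le_floor]
          have hd : (-2:ℝ) / r ≤ ⟪x, wvec ((jfn x : ℝ) * γ)⟫ / r :=
            (div_le_div_iff_of_pos_right hr0).mpr hw2.1
          push_cast
          rw [neg_div] at hd
          linarith
        · have hu2 : ⟪x, wvec ((jfn x : ℝ) * γ)⟫ / r ≤ 2 / r :=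
            (div_le_div_iff_of_pos_right hr0).mpr hw2.2
          have h := (Int.floor_le (⟪x, wvec ((jfn x : ℝ) * γ)⟫ / r)).trans (hu2.trans hcu)
          exact_mod_cast h
    have fiber : ∀ p ∈ hEfin.toFinset.image f,
        (hEfin.toFinset.filter fun x => f x = p).card ≤ m := by
      intro p hp
      obtain ⟨x₀, hx₀, hfx₀⟩ := Finset.mem_image.mp hp
      have hx₀A : x₀ ∈ A := hBA (hmemB x₀ hx₀)
      have hSfin : (A ∩ Metric.closedBall x₀ ((2:ℝ) ^ (-(k:ℤ)))).Finite :=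
        hAfin.inter_of_left _
      have hsub : (hEfin.toFinset.filter fun x => f x = p) ⊆ hSfin.toFinset := by
        intro y hy
        obtain ⟨hyE, hfy⟩ := Finset.mem_filter.mp hy
        rw [Set.Finite.mem_toFinset]
        refine ⟨hBA (hmemB y hyE), ?_⟩
        rw [Metric.mem_closedBall, dist_comm]
        exact le_trans (pair x₀ hx₀ y hyE (by rw [hfx₀, hfy])) hkr
      have hcount := (hAR.2 x₀ hx₀A k hkN).2
      have hnat : hSfin.toFinset.card ≤ m := by
        rw [hmdef]
        apply Nat.le_floor
        have he : (hSfin.toFinset.card : ℝ)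
            = (Nat.card ↥(A ∩ Metric.closedBall x₀ ((2:ℝ) ^ (-(k:ℤ)))) : ℝ) := by
          rw [Nat.card_coe_set_eq, Set.ncard_eq_toFinset_card _ hSfin]
        rw [he]
        exact hcount
      exact le_trans (Finset.card_le_card hsub) hnat
    have hcard1 : hEfin.toFinset.card ≤ m * (hEfin.toFinset.image f).card :=
      Finset.card_le_mul_card_image _ m fiber
    have hcard2 : (hEfin.toFinset.image f).card ≤ K * (c2 + 1 - -c2).toNat := by
      calc (hEfin.toFinset.image f).card
          ≤ (Finset.range K ×ˢ Finset.Icc (-c2) c2).card := Finset.card_le_card himg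
        _ = K * (c2 + 1 - -c2).toNat := by
            rw [Finset.card_product, Finset.card_range, Int.card_Icc]
    have hEcard : (Nat.card ↥({x ∈ B | P x} : Set Plane) : ℝ) = (hEfin.toFinset.card : ℝ) := by
      rw [Nat.card_coe_set_eq, Set.ncard_eq_toFinset_card _ hEfin]
    rw [hEcard]
    have hmR : (m:ℝ) ≤ C * (2:ℝ) ^ (((N:ℝ) - (k:ℝ)) * s) := Nat.floor_le (by positivity)
    have hx1 : ((N:ℝ) - (k:ℝ)) * s ≤ ((1 - τ) * (N:ℝ) + (J:ℝ)) * s := by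
      apply mul_le_mul_of_nonneg_right _ hs0.le
      rw [hkcast]; linarith
    have hmR2 : (m:ℝ) ≤ C * (2:ℝ) ^ (((1 - τ) * (N:ℝ) + (J:ℝ)) * s) := by
      refine le_trans hmR (mul_le_mul_of_nonneg_left ?_ hC0.le)
      exact Real.rpow_le_rpow_of_exponent_le one_le_two hx1
    have hc2R : (c2:ℝ) < 2 / r + 1 := Int.ceil_lt_add_one _
    have hLR : (((c2 + 1 - -c2).toNat : ℕ) : ℝ) ≤ 7 / r := by
      have hz : (0:ℤ) ≤ c2 := by exact_mod_cast hc2nn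
      have h3 : ((c2 + 1 - -c2).toNat : ℝ) = 2 * (c2:ℝ) + 1 := by
        have h := Int.toNat_of_nonneg (by omega : (0:ℤ) ≤ c2 + 1 - -c2)
        have h' : (((c2 + 1 - -c2).toNat : ℤ) : ℝ) = ((c2 + 1 - -c2 : ℤ) : ℝ) := by
          exact_mod_cast congrArg Int.cast h
        push_cast at h' ⊢
        linarith
      rw [h3]
      have h4 : (3:ℝ) ≤ 3 / r := by rw [le_div_iff₀ hr0]; linarith
      have h6 : (4:ℝ) / r + 3 / r = 7 / r := by ring
      have h7 : (4:ℝ) / r = 2 * (2 / r) := by ring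
      linarith
    have hKR : (K:ℝ) ≤ Real.pi / γ + 1 := by
      rw [hKdef]
      push_cast
      have h := Nat.floor_le (show (0:ℝ) ≤ Real.pi / γ by positivity)
      linarith
    have hrinv : 7 / r = 7 * (2:ℝ) ^ (τ * (N:ℝ)) := by
      rw [hrτ, Real.rpow_neg (by norm_num : (0:ℝ) ≤ 2)]
      field_simp
    calc (hEfin.toFinset.card : ℝ)
        ≤ (m:ℝ) * ((K:ℝ) * (((c2 + 1 - -c2).toNat : ℕ):ℝ)) := by
          have h := le_trans hcard1 (Nat.mul_le_mul le_rfl hcard2)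
          exact_mod_cast h
      _ ≤ (C * (2:ℝ) ^ (((1 - τ) * (N:ℝ) + (J:ℝ)) * s)) * ((Real.pi / γ + 1) * (7 / r)) := by
          apply mul_le_mul hmR2
          · apply mul_le_mul hKR hLR (by positivity) (by positivity)
          · positivity
          · positivity
      _ = D * ((2:ℝ) ^ ((1 - τ) * (N:ℝ) * s) * (2:ℝ) ^ (τ * (N:ℝ))) := by
          rw [hrinv, hDdef,
            show ((1 - τ) * (N:ℝ) + (J:ℝ)) * s = (J:ℝ) * s + (1 - τ) * (N:ℝ) * s by ring,
            Real.rpow_add two_pos]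
          ring
      _ ≤ (2:ℝ) ^ (κ * s * (N:ℝ)) * ((2:ℝ) ^ ((1 - τ) * (N:ℝ) * s) * (2:ℝ) ^ (τ * (N:ℝ))) :=
          mul_le_mul_of_nonneg_right hc3 (by positivity)
      _ = (2:ℝ) ^ ((1 - κ) * s * (N:ℝ)) := by
          rw [← Real.rpow_add two_pos, ← Real.rpow_add two_pos]
          congr 1
          linear_combination (-(N:ℝ)) * hτs
end

section
/- There is a constant C(d) depending only on the dimension d such that for all integers 0 < q < N and every probability measure μ on [0,1)^d: | H_N(μ) − (1/N) ∑_{n=0}^{N−1} ∑_{Q ∈ 𝒟_n, μ(Q)>0} μ(Q) H_q(μ^Q) | ≤ C(d) · q/N. -/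
open MeasureTheory Metric Set Filter
open scoped ENNReal NNReal Topology

noncomputable section

namespace LEFGE

variable {d : ℕ}

lemma two_zpow_neg (k : ℕ) : (2 : ℝ) ^ (-(k : ℤ)) = ((2 : ℝ) ^ k)⁻¹ := by
  rw [zpow_neg, zpow_natCast]

lemma Ico_iff {a : ℤ} {k : ℕ} {x : ℝ} :
    ((a : ℝ) * (2 : ℝ) ^ (-(k : ℤ)) ≤ x ∧ x < ((a : ℝ) + 1) * (2 : ℝ) ^ (-(k : ℤ)))
      ↔ ⌊x * 2 ^ k⌋ = a := by
  have h2 : (0 : ℝ) < 2 ^ k := by positivity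
  rw [Int.floor_eq_iff, two_zpow_neg]
  constructor
  · rintro ⟨h1, h3⟩
    constructor
    · calc (a : ℝ) = a * (2 ^ k)⁻¹ * 2 ^ k := by field_simp
        _ ≤ x * 2 ^ k := by nlinarith
    · calc x * 2 ^ k < ((a : ℝ) + 1) * (2 ^ k)⁻¹ * 2 ^ k := by nlinarith
        _ = (a : ℝ) + 1 := by field_simp
  · rintro ⟨h1, h3⟩
    constructor
    · rw [mul_inv_le_iff₀ h2]; exact h1
    · rw [lt_mul_inv_iff₀ h2]; exact_mod_cast h3

lemma mem_dcube {x : EuclideanSpace ℝ (Fin d)} {k : ℕ} {m : Fin d → ℤ} :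
    x ∈ dcube d k m ↔ ∀ i, ⌊x i * 2 ^ k⌋ = m i := by
  unfold dcube
  simp only [Set.mem_setOf_eq]
  exact forall_congr' fun i => Ico_iff

/-- The indices of dyadic cubes of generation `k` inside the unit cube. -/
def box (d k : ℕ) : Finset (Fin d → ℤ) :=
  Fintype.piFinset (fun _ => Finset.Ico (0 : ℤ) (2 ^ k))

lemma mem_box {k : ℕ} {m : Fin d → ℤ} :
    m ∈ box d k ↔ ∀ i, 0 ≤ m i ∧ m i < 2 ^ k := by
  simp [box, Fintype.mem_piFinset, Finset.mem_Ico]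

lemma card_box (k : ℕ) : (box d k).card = 2 ^ (k * d) := by
  simp only [box, Fintype.card_piFinset, Int.card_Ico]
  rw [Finset.prod_const, Finset.card_univ, Fintype.card_fin]
  rw [sub_zero, pow_mul]
  congr 1

lemma measurableSet_dcube {k : ℕ} {m : Fin d → ℤ} : MeasurableSet (dcube d k m) := by
  have : dcube d k m = ⋂ i, (fun x : EuclideanSpace ℝ (Fin d) => x i) ⁻¹'
      Set.Ico ((m i : ℝ) * (2 : ℝ) ^ (-(k : ℤ))) (((m i : ℝ) + 1) * (2 : ℝ) ^ (-(k : ℤ))) := by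
    ext x; simp [dcube, Set.mem_iInter, Set.mem_Ico]
  rw [this]
  exact MeasurableSet.iInter fun i => (EuclideanSpace.proj (𝕜 := ℝ) i).continuous.measurable measurableSet_Ico

lemma unitCubeHO_eq : unitCubeHO d = dcube d 0 (fun _ => 0) := by
  ext x
  simp [unitCubeHO, dcube]

lemma measurable_cubeMap {k : ℕ} {m : Fin d → ℤ} : Measurable (cubeMap d k m) := by
  have hc : Continuous (cubeMap d k m) := by
    apply ((EuclideanSpace.equiv (Fin d) ℝ).symm.continuous).comp
    exact continuous_pi fun i =>
      (continuous_const.mul ((continuous_apply i).comp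
        (EuclideanSpace.equiv (Fin d) ℝ).continuous)).sub continuous_const
  exact hc.measurable

lemma cubeMap_apply {k : ℕ} {m : Fin d → ℤ} (x : EuclideanSpace ℝ (Fin d)) (i : Fin d) :
    cubeMap d k m x i = (2 : ℝ) ^ k * x i - (m i : ℝ) := rfl

lemma cubeMap_preimage (n q : ℕ) (m m' : Fin d → ℤ) :
    cubeMap d n m ⁻¹' dcube d q m' = dcube d (n + q) (fun i => 2 ^ q * m i + m' i) := by
  ext x
  simp only [Set.mem_preimage, mem_dcube, cubeMap_apply]
  refine forall_congr' fun i => ?_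
  have he : ((2:ℝ) ^ n * x i - (m i : ℝ)) * 2 ^ q = x i * 2 ^ (n + q) - ((2 ^ q * m i : ℤ) : ℝ) := by
    push_cast; ring
  rw [he, Int.floor_sub_intCast]
  omega

end LEFGE


namespace LEFGE2
open LEFGE
variable {d : ℕ}

/-- The combined index of a subcube. -/
def comb (q : ℕ) (m m' : Fin d → ℤ) : Fin d → ℤ := fun i => 2 ^ q * m i + m' i

lemma dcube_eq_biUnion (n q : ℕ) (m : Fin d → ℤ) :
    dcube d n m = ⋃ m' ∈ box d q, dcube d (n + q) (comb q m m') := by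
  ext x
  simp only [Set.mem_iUnion, mem_dcube, comb]
  constructor
  · intro hx
    refine ⟨fun i => ⌊x i * 2 ^ (n + q)⌋ - 2 ^ q * m i, ?_, fun i => by simp only []; omega⟩
    rw [mem_box]
    intro i
    have h1 := hx i
    have h2 : ((2 ^ q * m i : ℤ) : ℝ) ≤ x i * 2 ^ (n + q) := by
      have := (Int.floor_eq_iff.mp h1).1
      push_cast
      calc ((2:ℝ) ^ q * m i) = (m i) * 2 ^ q := by ring
        _ ≤ (x i * 2 ^ n) * 2 ^ q := by nlinarith [pow_pos (two_pos (α := ℝ)) q]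
        _ = x i * 2 ^ (n + q) := by rw [pow_add]; ring
    have h3 : x i * 2 ^ (n + q) < ((2 ^ q * m i + 2 ^ q : ℤ) : ℝ) := by
      have := (Int.floor_eq_iff.mp h1).2
      push_cast
      calc x i * 2 ^ (n + q) = (x i * 2 ^ n) * 2 ^ q := by rw [pow_add]; ring
        _ < ((m i : ℝ) + 1) * 2 ^ q := by nlinarith [pow_pos (two_pos (α := ℝ)) q]
        _ = 2 ^ q * (m i : ℝ) + 2 ^ q := by ring
    have hb1 : (2 ^ q * m i : ℤ) ≤ ⌊x i * 2 ^ (n + q)⌋ := Int.le_floor.mpr h2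
    have hb2 : ⌊x i * 2 ^ (n + q)⌋ < 2 ^ q * m i + 2 ^ q := Int.floor_lt.mpr h3
    omega
  · rintro ⟨m', hm', hx⟩
    rw [mem_box] at hm'
    intro i
    have h1 := hx i
    have hb := hm' i
    have h2 : ((2 ^ q * m i + m' i : ℤ) : ℝ) ≤ x i * 2 ^ (n + q) ∧
        x i * 2 ^ (n + q) < (2 ^ q * m i + m' i : ℤ) + 1 := Int.floor_eq_iff.mp h1
    rw [Int.floor_eq_iff]
    have hq : (0:ℝ) < 2 ^ q := by positivity
    have hxe : x i * 2 ^ (n + q) = (x i * 2 ^ n) * 2 ^ q := by rw [pow_add]; ring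
    obtain ⟨h2a, h2b⟩ := h2
    rw [hxe] at h2a h2b
    push_cast at h2a h2b
    constructor
    · have hm'0 : (0:ℝ) ≤ (m' i : ℝ) := by exact_mod_cast hb.1
      nlinarith
    · have hm'1 : (m' i : ℝ) ≤ 2 ^ q - 1 := by
        have : m' i ≤ 2 ^ q - 1 := by omega
        calc (m' i : ℝ) ≤ ((2 ^ q - 1 : ℤ) : ℝ) := by exact_mod_cast this
          _ = 2 ^ q - 1 := by push_cast; ring
      nlinarith

lemma dcube_disjoint {k : ℕ} {a b : Fin d → ℤ} (hab : a ≠ b) :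
    Disjoint (dcube d k a) (dcube d k b) := by
  rw [Set.disjoint_left]
  intro x hxa hxb
  exact hab (funext fun i => by rw [← mem_dcube.mp hxa i, mem_dcube.mp hxb i])


lemma sum_box_split (n q : ℕ) (f : (Fin d → ℤ) → ℝ) :
    ∑ m ∈ box d n, ∑ m' ∈ box d q, f (comb q m m') = ∑ l ∈ box d (n + q), f l := by
  rw [← Finset.sum_product']
  apply Finset.sum_nbij' (i := fun p => comb q p.1 p.2)
    (j := fun l => (fun i => l i / 2 ^ q, fun i => l i % 2 ^ q))
  · rintro ⟨m, m'⟩ hp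
    rw [Finset.mem_product] at hp
    rw [mem_box]
    intro i
    have h1 := mem_box.mp hp.1 i
    have h2 := mem_box.mp hp.2 i
    have : (2:ℤ) ^ (n + q) = 2 ^ q * 2 ^ n := by rw [pow_add]; ring
    have h2q : (0:ℤ) < 2 ^ q := by positivity
    constructor
    · simp only [comb]; nlinarith [h1.1, h2.1]
    · simp only [comb]; nlinarith
  · intro l hl
    rw [Finset.mem_product]
    have h2q : (0:ℤ) < 2 ^ q := by positivity
    constructor
    · rw [mem_box]
      intro i
      have h1 := mem_box.mp hl i
      constructor
      · exact Int.ediv_nonneg h1.1 (le_of_lt h2q)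
      · rw [Int.ediv_lt_iff_lt_mul h2q]
        calc l i < 2 ^ (n + q) := h1.2
          _ = 2 ^ n * 2 ^ q := by rw [pow_add]
    · rw [mem_box]
      intro i
      exact ⟨Int.emod_nonneg _ (ne_of_gt h2q), Int.emod_lt_of_pos _ h2q⟩
  · rintro ⟨m, m'⟩ hp
    rw [Finset.mem_product] at hp
    have h2q : (0:ℤ) < 2 ^ q := by positivity
    have key : ∀ i, 0 ≤ m' i ∧ m' i < 2 ^ q := mem_box.mp hp.2
    refine Prod.ext ?_ ?_ <;> funext i <;> simp only [comb]
    · rw [add_comm, Int.add_mul_ediv_left _ _ (ne_of_gt h2q),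
        Int.ediv_eq_zero_of_lt (key i).1 (key i).2, zero_add]
    · rw [add_comm, Int.add_mul_emod_self_left, Int.emod_eq_of_lt (key i).1 (key i).2]
  · intro l hl
    funext i
    simp only [comb]
    rw [Int.mul_ediv_add_emod]
  · intro p hp
    rfl

end LEFGE2


namespace LEFGE3
open LEFGE LEFGE2
variable {d : ℕ} (μ : MeasureTheory.Measure (EuclideanSpace ℝ (Fin d)))

/-- `φ(x) = -x log₂ x`. -/
def phi (x : ℝ) : ℝ := -(x * Real.logb 2 x)

@[simp] lemma phi_zero : phi 0 = 0 := by simp [phi]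

@[simp] lemma phi_one : phi 1 = 0 := by simp [phi]

lemma phi_nonneg {x : ℝ} (h0 : 0 ≤ x) (h1 : x ≤ 1) : 0 ≤ phi x := by
  have : Real.logb 2 x ≤ 0 := Real.logb_nonpos (by norm_num) h0 h1
  simp only [phi]
  nlinarith

lemma entropy_eq (k : ℕ) :
    entropy d μ k = ∑' m : Fin d → ℤ, phi ((μ (dcube d k m)).toReal) := rfl

lemma measure_dcube_split (n q : ℕ) (m : Fin d → ℤ) :
    μ (dcube d n m) = ∑ m' ∈ box d q, μ (dcube d (n + q) (comb q m m')) := by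
  rw [dcube_eq_biUnion n q m]
  rw [measure_biUnion_finset ?_ (fun b _ => measurableSet_dcube)]
  intro a ha b hb hab
  apply dcube_disjoint
  intro hc
  apply hab
  funext i
  have := congrFun hc i
  simp only [comb] at this
  omega

lemma subcube_subset (n q : ℕ) (m : Fin d → ℤ) {m' : Fin d → ℤ} (h : m' ∈ box d q) :
    dcube d (n + q) (comb q m m') ⊆ dcube d n m := by
  intro x hx
  rw [dcube_eq_biUnion n q m]
  exact Set.mem_biUnion h hx

variable [MeasureTheory.IsProbabilityMeasure μ]

lemma measure_dcube_zero (hs : μ (unitCubeHO d) = 1) {n : ℕ} {m : Fin d → ℤ}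
    (hm : m ∉ box d n) : μ (dcube d n m) = 0 := by
  have hcompl : μ (unitCubeHO d)ᶜ = 0 := by
    rw [measure_compl (by rw [unitCubeHO_eq]; exact measurableSet_dcube)
      (MeasureTheory.measure_ne_top μ _), hs, measure_univ, tsub_self]
  refine le_antisymm (le_trans (measure_mono ?_) hcompl.le) zero_le
  intro x hx hxu
  apply hm
  rw [mem_box]
  intro i
  have hf := mem_dcube.mp hx i
  have hu := hxu i
  have h2n : (0:ℝ) < 2 ^ n := by positivity
  constructor
  · have : (0:ℝ) ≤ x i * 2 ^ n := by nlinarith [hu.1]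
    have := Int.le_floor.mpr (by exact_mod_cast this : ((0:ℤ):ℝ) ≤ x i * 2 ^ n)
    omega
  · have : x i * 2 ^ n < ((2 ^ n : ℤ) : ℝ) := by push_cast; nlinarith [hu.2]
    have := Int.floor_lt.mpr this
    omega

lemma sum_p_eq_one (hs : μ (unitCubeHO d) = 1) (n : ℕ) :
    ∑ m ∈ box d n, (μ (dcube d n m)).toReal = 1 := by
  have h0 : μ (dcube d 0 (fun _ => 0)) = 1 := by rw [← unitCubeHO_eq]; exact hs
  have := measure_dcube_split μ 0 n (fun _ => 0)
  rw [h0] at this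
  have hcomb : ∀ m' : Fin d → ℤ, comb n (fun _ => (0:ℤ)) m' = m' := by
    intro m'; funext i; simp [comb]
  simp only [hcomb, zero_add] at this
  rw [← ENNReal.toReal_sum (fun a _ => MeasureTheory.measure_ne_top μ _), ← this]
  simp

lemma toReal_split (n q : ℕ) (m : Fin d → ℤ) :
    (μ (dcube d n m)).toReal
      = ∑ m' ∈ box d q, (μ (dcube d (n + q) (comb q m m'))).toReal := by
  rw [measure_dcube_split μ n q m, ENNReal.toReal_sum (fun a _ => MeasureTheory.measure_ne_top μ _)]

lemma cubeMeasure_dcube (n q : ℕ) (m m' : Fin d → ℤ) :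
    cubeMeasure d n m μ (dcube d q m')
      = (μ (dcube d n m))⁻¹ * μ (dcube d (n + q) (comb q m m') ∩ dcube d n m) := by
  unfold cubeMeasure
  rw [MeasureTheory.Measure.map_apply measurable_cubeMap measurableSet_dcube,
    cubeMap_preimage, MeasureTheory.Measure.smul_apply,
    MeasureTheory.Measure.restrict_apply measurableSet_dcube, smul_eq_mul]
  rfl

lemma cubeMeasure_dcube_of_mem (n q : ℕ) (m : Fin d → ℤ) {m' : Fin d → ℤ} (h : m' ∈ box d q) :
    cubeMeasure d n m μ (dcube d q m')
      = (μ (dcube d n m))⁻¹ * μ (dcube d (n + q) (comb q m m')) := by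
  rw [cubeMeasure_dcube, Set.inter_eq_left.mpr (subcube_subset n q m h)]

lemma cubeMeasure_dcube_of_not_mem (n q : ℕ) (m : Fin d → ℤ) {m' : Fin d → ℤ}
    (h : m' ∉ box d q) :
    cubeMeasure d n m μ (dcube d q m') = 0 := by
  rw [cubeMeasure_dcube]
  have : dcube d (n + q) (comb q m m') ∩ dcube d n m = ∅ := by
    ext x
    simp only [Set.mem_inter_iff, Set.mem_empty_iff_false, iff_false, not_and]
    intro hx1 hx2
    rw [dcube_eq_biUnion n q m] at hx2
    simp only [Set.mem_iUnion] at hx2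
    obtain ⟨a, ha, hxa⟩ := hx2
    apply h
    have : comb q m a = comb q m m' := by
      funext i
      rw [← mem_dcube.mp hxa i, mem_dcube.mp hx1 i]
    have haeq : a = m' := by
      funext i
      have := congrFun this i
      simp only [comb] at this
      omega
    rwa [← haeq]
  rw [this, measure_empty, mul_zero]

lemma entropy_cubeMeasure (n q : ℕ) (m : Fin d → ℤ) :
    entropy d (cubeMeasure d n m μ) q
      = ∑ m' ∈ box d q,
          phi ((μ (dcube d (n + q) (comb q m m'))).toReal / (μ (dcube d n m)).toReal) := by
  rw [entropy_eq]
  rw [tsum_eq_sum (s := box d q) (fun b hb => by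
    rw [cubeMeasure_dcube_of_not_mem μ n q m hb]; simp)]
  refine Finset.sum_congr rfl fun m' hm' => ?_
  rw [cubeMeasure_dcube_of_mem μ n q m hm', ENNReal.toReal_mul, ENNReal.toReal_inv,
    inv_mul_eq_div]

end LEFGE3


namespace LEFGE4
open LEFGE LEFGE2 LEFGE3

lemma sum_phi_div {ι : Type*} (s : Finset ι) (a : ι → ℝ) (b : ℝ) (hb : 0 < b)
    (ha : ∀ i ∈ s, 0 ≤ a i) (hsum : ∑ i ∈ s, a i = b) :
    b * ∑ i ∈ s, phi (a i / b) = (∑ i ∈ s, phi (a i)) - phi b := by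
  have key : ∀ i ∈ s, b * phi (a i / b) = phi (a i) + a i * Real.logb 2 b := by
    intro i hi
    rcases eq_or_lt_of_le (ha i hi) with h0 | h0
    · rw [← h0]; simp
    · have hbne : b ≠ 0 := ne_of_gt hb
      have hane : a i ≠ 0 := ne_of_gt h0
      simp only [phi]
      rw [Real.logb_div hane hbne]
      field_simp
      ring
  rw [Finset.mul_sum, Finset.sum_congr rfl key, Finset.sum_add_distrib, ← Finset.sum_mul, hsum]
  simp only [phi]; ring

lemma sum_phi_le_log_card {ι : Type*} (s : Finset ι) (a : ι → ℝ) (ha : ∀ i ∈ s, 0 ≤ a i)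
    (h1 : ∑ i ∈ s, a i = 1) : ∑ i ∈ s, phi (a i) ≤ Real.logb 2 s.card := by
  have hne : s.Nonempty := by
    rcases Finset.eq_empty_or_nonempty s with h | h
    · exfalso; rw [h] at h1; simp at h1
    · exact h
  have hcard : (0:ℝ) < s.card := by exact_mod_cast Finset.card_pos.mpr hne
  have hjen := Real.concaveOn_negMulLog.le_map_sum (t := s) (w := fun _ => (s.card : ℝ)⁻¹)
    (p := a) (fun i _ => by positivity)
    (by rw [Finset.sum_const, nsmul_eq_mul]; field_simp)
    (fun i hi => ha i hi)
  have hsum2 : ∑ i ∈ s, (s.card : ℝ)⁻¹ • a i = (s.card : ℝ)⁻¹ := by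
    simp only [smul_eq_mul, ← Finset.mul_sum, h1, mul_one]
  rw [hsum2] at hjen
  have hval : Real.negMulLog (s.card : ℝ)⁻¹ = (s.card : ℝ)⁻¹ * Real.log s.card := by
    simp only [Real.negMulLog, Real.log_inv]
    ring
  rw [hval] at hjen
  simp only [smul_eq_mul, ← Finset.mul_sum] at hjen
  have hlog : ∑ i ∈ s, Real.negMulLog (a i) ≤ Real.log s.card := by
    have := mul_le_mul_of_nonneg_left hjen (le_of_lt hcard)
    rw [← mul_assoc, ← mul_assoc, mul_inv_cancel₀ (ne_of_gt hcard), one_mul, one_mul] at this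
    exact this
  have hphi : ∀ x : ℝ, phi x = Real.negMulLog x / Real.log 2 := by
    intro x
    simp only [phi, Real.negMulLog, Real.logb, div_eq_mul_inv]
    ring
  have hlog2 : (0:ℝ) < Real.log 2 := Real.log_pos (by norm_num)
  calc ∑ i ∈ s, phi (a i) = (∑ i ∈ s, Real.negMulLog (a i)) / Real.log 2 := by
        rw [Finset.sum_div]; exact Finset.sum_congr rfl fun i _ => hphi (a i)
    _ ≤ Real.log s.card / Real.log 2 := by
        exact div_le_div_of_nonneg_right hlog (le_of_lt hlog2)
    _ = Real.logb 2 s.card := rfl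

end LEFGE4


namespace LEFGE5
open LEFGE LEFGE2 LEFGE3 LEFGE4

variable {d : ℕ} (μ : MeasureTheory.Measure (EuclideanSpace ℝ (Fin d)))
  [MeasureTheory.IsProbabilityMeasure μ]

lemma toReal_le_one (s : Set (EuclideanSpace ℝ (Fin d))) : (μ s).toReal ≤ 1 := by
  have h := MeasureTheory.prob_le_one (μ := μ) (s := s)
  calc (μ s).toReal ≤ (1 : ℝ≥0∞).toReal := ENNReal.toReal_mono ENNReal.one_ne_top h
    _ = 1 := by simp

lemma entropy_eq_sum (hs : μ (unitCubeHO d) = 1) (k : ℕ) :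
    entropy d μ k = ∑ m ∈ box d k, phi ((μ (dcube d k m)).toReal) := by
  rw [entropy_eq]
  exact tsum_eq_sum fun m hm => by rw [measure_dcube_zero μ hs hm]; simp

lemma entropy_zero_eq (hs : μ (unitCubeHO d) = 1) : entropy d μ 0 = 0 := by
  rw [entropy_eq_sum μ hs]
  apply Finset.sum_eq_zero
  intro m hm
  have hm0 : m = fun _ => (0:ℤ) := by
    funext i
    have := mem_box.mp hm i
    omega
  rw [hm0, ← unitCubeHO_eq, hs]
  simp

/-- Chain rule: conditional entropy over generation-`n` cubes. -/
lemma chain (hs : μ (unitCubeHO d) = 1) (n q : ℕ) :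
    ∑ m ∈ box d n, (μ (dcube d n m)).toReal * entropy d (cubeMeasure d n m μ) q
      = entropy d μ (n + q) - entropy d μ n := by
  have per : ∀ m ∈ box d n,
      (μ (dcube d n m)).toReal * entropy d (cubeMeasure d n m μ) q
        = (∑ m' ∈ box d q, phi ((μ (dcube d (n + q) (comb q m m'))).toReal))
          - phi ((μ (dcube d n m)).toReal) := by
    intro m _
    rcases eq_or_ne (μ (dcube d n m)) 0 with h0 | h0
    · have hsub : ∀ m' ∈ box d q, (μ (dcube d (n + q) (comb q m m'))).toReal = 0 := by
        intro m' hm'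
        have := MeasureTheory.measure_mono (μ := μ) (subcube_subset n q m hm')
        rw [h0] at this
        simp [le_antisymm this zero_le]
      rw [h0]
      rw [Finset.sum_congr rfl fun m' hm' => by rw [hsub m' hm']]
      simp
    · have hb : (0:ℝ) < (μ (dcube d n m)).toReal :=
        ENNReal.toReal_pos h0 (MeasureTheory.measure_ne_top μ _)
      rw [entropy_cubeMeasure]
      exact sum_phi_div (box d q) _ _ hb (fun m' _ => ENNReal.toReal_nonneg)
        (toReal_split μ n q m).symm
  rw [Finset.sum_congr rfl per, Finset.sum_sub_distrib,
    sum_box_split n q (fun l => phi ((μ (dcube d (n + q) l)).toReal)),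
    ← entropy_eq_sum μ hs, ← entropy_eq_sum μ hs]

lemma cube_entropy_nonneg (n q : ℕ) (m : Fin d → ℤ) (h0 : μ (dcube d n m) ≠ 0) :
    0 ≤ entropy d (cubeMeasure d n m μ) q := by
  rw [entropy_cubeMeasure]
  apply Finset.sum_nonneg
  intro m' hm'
  have hb : (0:ℝ) < (μ (dcube d n m)).toReal :=
    ENNReal.toReal_pos h0 (MeasureTheory.measure_ne_top μ _)
  have hab : (μ (dcube d (n + q) (comb q m m'))).toReal ≤ (μ (dcube d n m)).toReal :=
    ENNReal.toReal_mono (MeasureTheory.measure_ne_top μ _)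
      (MeasureTheory.measure_mono (subcube_subset n q m hm'))
  exact phi_nonneg (div_nonneg ENNReal.toReal_nonneg hb.le) ((div_le_one hb).mpr hab)

lemma cube_entropy_le (n q : ℕ) (m : Fin d → ℤ) (h0 : μ (dcube d n m) ≠ 0) :
    entropy d (cubeMeasure d n m μ) q ≤ (q : ℝ) * d := by
  rw [entropy_cubeMeasure]
  have hb : (0:ℝ) < (μ (dcube d n m)).toReal :=
    ENNReal.toReal_pos h0 (MeasureTheory.measure_ne_top μ _)
  have hle := sum_phi_le_log_card (box d q)
    (fun m' => (μ (dcube d (n + q) (comb q m m'))).toReal / (μ (dcube d n m)).toReal)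
    (fun m' _ => div_nonneg ENNReal.toReal_nonneg hb.le)
    (by rw [← Finset.sum_div, ← toReal_split]; exact div_self (ne_of_gt hb))
  refine hle.trans ?_
  rw [card_box]
  have : ((2 ^ (q * d) : ℕ) : ℝ) = (2 : ℝ) ^ (q * d) := by push_cast; ring
  rw [this, Real.logb_pow, Real.logb_self_eq_one (by norm_num)]
  push_cast
  ring_nf
  exact le_refl _

lemma entropy_step (hs : μ (unitCubeHO d) = 1) (n q : ℕ) :
    entropy d μ n ≤ entropy d μ (n + q)
      ∧ entropy d μ (n + q) ≤ entropy d μ n + (q : ℝ) * d := by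
  have hchain := chain μ hs n q
  constructor
  · have : 0 ≤ entropy d μ (n + q) - entropy d μ n := by
      rw [← hchain]
      apply Finset.sum_nonneg
      intro m _
      rcases eq_or_ne (μ (dcube d n m)) 0 with h0 | h0
      · rw [h0]; simp
      · exact mul_nonneg ENNReal.toReal_nonneg (cube_entropy_nonneg μ n q m h0)
    linarith
  · have : entropy d μ (n + q) - entropy d μ n ≤ (q : ℝ) * d := by
      rw [← hchain]
      calc ∑ m ∈ box d n, (μ (dcube d n m)).toReal * entropy d (cubeMeasure d n m μ) q
          ≤ ∑ m ∈ box d n, (μ (dcube d n m)).toReal * ((q : ℝ) * d) := by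
            apply Finset.sum_le_sum
            intro m _
            rcases eq_or_ne (μ (dcube d n m)) 0 with h0 | h0
            · rw [h0]; simp
            · exact mul_le_mul_of_nonneg_left (cube_entropy_le μ n q m h0)
                ENNReal.toReal_nonneg
        _ = (q : ℝ) * d := by rw [← Finset.sum_mul, sum_p_eq_one μ hs, one_mul]
    linarith

end LEFGE5

end

open LEFGE LEFGE2 LEFGE3 LEFGE4 LEFGE5

/-- **Lemma 2.1.** (Global entropy from local entropies.) There is `C(d)` such that for all
`0 < q < N` and every probability measure `μ` on `[0,1)^d`,
`|H_N(μ) - ∫ H_q dη d⟨μ⟩_{[0,N)}| ≤ C(d)·q/N`. -/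
theorem local_entropy_from_global_entropy (d : ℕ) :
    ∃ K : ℝ, 0 < K ∧ ∀ q N : ℕ, 0 < q → q < N →
    ∀ μ : MeasureTheory.Measure (EuclideanSpace ℝ (Fin d)),
      MeasureTheory.IsProbabilityMeasure μ → μ (unitCubeHO d) = 1 →
      |nentropy d μ N - sceneryAvg d μ N (fun η => nentropy d η q)| ≤ K * q / N := by
  refine ⟨(d : ℝ) + 1, by positivity, ?_⟩
  intro q N hq hqN μ hprob hs
  set e : ℕ → ℝ := fun k => entropy d μ k with he
  have hNpos : (0:ℝ) < N := by
    have : 0 < N := lt_trans hq hqN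
    exact_mod_cast this
  have hqpos : (0:ℝ) < q := by exact_mod_cast hq
  set T : ℝ := ∑ n ∈ Finset.range N, (e (n + q) - e n) with hT
  have havg : sceneryAvg d μ N (fun η => nentropy d η q) = (1 / N) * (T / q) := by
    unfold sceneryAvg
    rw [hT, Finset.sum_div]
    congr 1
    apply Finset.sum_congr rfl
    intro n _
    rw [tsum_eq_sum (s := box d n) (fun m hm => by
      rw [measure_dcube_zero μ hs hm]; simp)]
    have hper : ∀ m ∈ box d n,
        (μ (dcube d n m)).toReal * (fun η => nentropy d η q) (cubeMeasure d n m μ)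
          = ((μ (dcube d n m)).toReal * entropy d (cubeMeasure d n m μ) q) / q := by
      intro m _
      show (μ (dcube d n m)).toReal * (entropy d (cubeMeasure d n m μ) q / q) = _
      rw [mul_div_assoc]
    rw [Finset.sum_congr rfl hper, ← Finset.sum_div, chain μ hs n q]
  have htel : T = ∑ j ∈ Finset.range q, (e (N + j) - e j) := by
    rw [hT, Finset.sum_sub_distrib, Finset.sum_sub_distrib]
    have h1 : ∑ n ∈ Finset.range N, e (n + q) = ∑ k ∈ Finset.Ico q (N + q), e k := by
      rw [Finset.sum_Ico_eq_sum_range]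
      simp only [Nat.add_sub_cancel]
      exact Finset.sum_congr rfl fun n _ => by rw [add_comm]
    have h2 : ∑ j ∈ Finset.range q, e (N + j) = ∑ k ∈ Finset.Ico N (N + q), e k := by
      rw [Finset.sum_Ico_eq_sum_range]
      simp only [Nat.add_sub_cancel_left]
    have hc1 := Finset.sum_Ico_consecutive e (Nat.zero_le q) (Nat.le_add_left q N)
    have hc2 := Finset.sum_Ico_consecutive e (Nat.zero_le N) (Nat.le_add_right N q)
    rw [h1, h2, ← Finset.range_eq_Ico] at *
    linarith
  have hterm : ∀ j ∈ Finset.range q, |e (N + j) - e j - e N| ≤ (q : ℝ) * d := by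
    intro j hj
    have hjq : (j : ℝ) ≤ q := by
      have := Finset.mem_range.mp hj
      exact_mod_cast this.le
    have hjd : (j : ℝ) * d ≤ (q : ℝ) * d := by
      apply mul_le_mul_of_nonneg_right hjq (by positivity)
    have hstep1 := entropy_step μ hs N j
    have hstep2 := entropy_step μ hs 0 j
    have hez : entropy d μ 0 = 0 := entropy_zero_eq μ hs
    simp only [zero_add, hez] at hstep2
    show |entropy d μ (N + j) - entropy d μ j - entropy d μ N| ≤ (q : ℝ) * d
    rw [abs_le]
    refine ⟨?_, ?_⟩
    · linarith [hstep1.1, hstep2.2, hjd]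
    · linarith [hstep1.2, hstep2.1, hjd]
  have hbound : |T - (q : ℝ) * e N| ≤ (q : ℝ) * ((q : ℝ) * d) := by
    have heq : T - (q : ℝ) * e N = ∑ j ∈ Finset.range q, (e (N + j) - e j - e N) := by
      have hx : ∑ j ∈ Finset.range q, (e (N + j) - e j - e N)
          = (∑ j ∈ Finset.range q, (e (N + j) - e j)) - (q : ℝ) * e N := by
        rw [Finset.sum_sub_distrib, Finset.sum_const, Finset.card_range, nsmul_eq_mul]
      rw [hx, htel]
    rw [heq]
    refine (Finset.abs_sum_le_sum_abs _ _).trans ?_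
    calc ∑ j ∈ Finset.range q, |e (N + j) - e j - e N|
        ≤ ∑ _j ∈ Finset.range q, (q : ℝ) * d := Finset.sum_le_sum hterm
      _ = (q : ℝ) * ((q : ℝ) * d) := by
          rw [Finset.sum_const, Finset.card_range, nsmul_eq_mul]
  have hnent : nentropy d μ N = e N / N := rfl
  have hdiff : nentropy d μ N - sceneryAvg d μ N (fun η => nentropy d η q)
      = ((q : ℝ) * e N - T) / ((N : ℝ) * q) := by
    rw [havg, hnent]
    field_simp
  rw [hdiff, abs_div, abs_of_pos (by positivity : (0:ℝ) < (N : ℝ) * q)]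
  have habs : |(q : ℝ) * e N - T| ≤ (q : ℝ) * ((q : ℝ) * d) := by
    rw [abs_sub_comm]; exact hbound
  calc |(q : ℝ) * e N - T| / ((N : ℝ) * q)
      ≤ ((q : ℝ) * ((q : ℝ) * d)) / ((N : ℝ) * q) :=
        div_le_div_of_nonneg_right habs (by positivity)
    _ = (d : ℝ) * q / N := by field_simp
    _ ≤ ((d : ℝ) + 1) * q / N := by
        apply div_le_div_of_nonneg_right _ hNpos.le
        nlinarith
end
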